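/- arXiv:2105.05513 — 6 statements merged into one kernel-verified Lean document; each statement's English description precedes it below -/
import Mathlib

section
/- For any n ≥ 0 and d ≥ 1, the number of d-ary rooted plane trees with n internal nodes equals C(dn+1, n)/(dn+1). -/
/-- A `d`-ary tree: a finite prefix-closed set of words over `Fin d` containing
the empty word, where every node has either all `d` children or none. -/
structure DaryTree (d : ℕ) where
  words : Finset (List (Fin d))
  nil_mem : [] ∈ words
  prefix_closed : ∀ u v : List (Fin d), u ∈ words → v <+: u → v ∈ words
  complete : ∀ (u : List (Fin d)) (j : Fin d), u ++ [j] ∈ words → ∀ k : Fin d, u ++ [k] ∈ words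

/-- `u` is a leaf of `T`: a node with no children. -/
def isLeaf {d : ℕ} (T : DaryTree d) (u : List (Fin d)) : Prop :=
  u ∈ T.words ∧ ∀ j : Fin d, u ++ [j] ∉ T.words

/-- `u` is an internal node of `T`: a node with children. -/
def isInternal {d : ℕ} (T : DaryTree d) (u : List (Fin d)) : Prop :=
  u ∈ T.words ∧ ∃ j : Fin d, u ++ [j] ∈ T.words

/-- The number of internal nodes of `T`. -/
noncomputable def internalCount {d : ℕ} (T : DaryTree d) : ℕ :=
  Nat.card {u : List (Fin d) // isInternal T u}

/-- The number of leaves of `T`. -/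
noncomputable def leafCount {d : ℕ} (T : DaryTree d) : ℕ :=
  Nat.card {u : List (Fin d) // isLeaf T u}

namespace FussAux

def PC {d : ℕ} (I : Finset (List (Fin d))) : Prop :=
  ∀ u ∈ I, ∀ v : List (Fin d), v <+: u → v ∈ I

def Valid (d : ℕ) (l : List Bool) : Prop :=
  l.length = d * l.count true + 1 ∧ ∀ m, m < l.length → m ≤ d * ((l.take m).count true)

def Blocky (d k : ℕ) (l : List Bool) : Prop :=
  l.length = d * l.count true + k ∧ ∀ m, m < l.length → m + 1 ≤ d * ((l.take m).count true) + k

def J {k : ℕ} (f : Fin k → List Bool) : List Bool := (List.ofFn f).flatten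

lemma countP_range (p : ℕ → Bool) (m : ℕ) :
    (List.range m).countP p = ∑ j ∈ Finset.range m, if p j then 1 else 0 := by
  induction m with
  | zero => simp
  | succ m ih =>
    rw [List.range_succ, List.countP_append, Finset.sum_range_succ, ih]
    simp [List.countP_cons]

section S1
variable {d : ℕ}


lemma DaryTree.ext' {d : ℕ} {T T' : DaryTree d} (h : T.words = T'.words) : T = T' := by
  cases T; cases T'; simpa using h

/-- the finset of internal nodes -/
def intF {d : ℕ} (T : DaryTree d) : Finset (List (Fin d)) :=
  T.words.filter (fun u => ∃ j : Fin d, u ++ [j] ∈ T.words)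

lemma mem_intF {d : ℕ} (T : DaryTree d) (u : List (Fin d)) :
    u ∈ intF T ↔ isInternal T u := by
  simp [intF, isInternal]

lemma internalCount_eq {d : ℕ} (T : DaryTree d) : internalCount T = (intF T).card := by
  rw [internalCount, ← Nat.card_eq_finsetCard]
  exact Nat.card_congr (Equiv.subtypeEquivRight (fun u => (mem_intF T u).symm))

lemma pc_intF {d : ℕ} (T : DaryTree d) : PC (intF T) := by
  intro u hu v hv
  rw [mem_intF] at hu ⊢
  obtain ⟨huw, j, hj⟩ := hu
  refine ⟨T.prefix_closed u v huw hv, ?_⟩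
  rcases eq_or_ne v u with rfl | hne
  · exact ⟨j, hj⟩
  · obtain ⟨w, rfl⟩ := hv
    cases w with
    | nil => simp at hne
    | cons x w' =>
      exact ⟨x, T.prefix_closed _ _ huw ⟨w', by simp⟩⟩

/-- build a tree from a prefix-closed finset of internal nodes -/
def treeOf {d : ℕ} (I : Finset (List (Fin d))) (hI : PC I) : DaryTree d where
  words := insert [] ((I ×ˢ (Finset.univ : Finset (Fin d))).image fun p => p.1 ++ [p.2])
  nil_mem := Finset.mem_insert_self _ _
  prefix_closed := by
    intro u v hu hv
    simp only [Finset.mem_insert, Finset.mem_image, Finset.mem_product] at hu ⊢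
    rcases hu with rfl | ⟨⟨p, j⟩, ⟨hp, -⟩, rfl⟩
    · left; simpa using List.prefix_nil.mp hv
    · rcases List.prefix_concat_iff.mp hv with rfl | hvp
      · right; exact ⟨⟨p, j⟩, ⟨hp, Finset.mem_univ _⟩, rfl⟩
      · -- v <+: p, so v ∈ I
        have hvI : v ∈ I := hI p hp v hvp
        rcases eq_or_ne v [] with rfl | hne
        · left; rfl
        · right
          refine ⟨⟨v.dropLast, v.getLast hne⟩, ⟨hI v hvI _ (List.dropLast_prefix v), Finset.mem_univ _⟩, ?_⟩
          simp [List.dropLast_append_getLast hne]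
  complete := by
    intro u j hj k
    simp only [Finset.mem_insert, Finset.mem_image, Finset.mem_product] at hj ⊢
    rcases hj with h | ⟨⟨p, j'⟩, ⟨hp, -⟩, he⟩
    · simp at h
    · obtain ⟨rfl, -⟩ : u = p ∧ j = j' := by
        have := List.append_inj' he.symm rfl
        simpa using this
      right; exact ⟨⟨u, k⟩, ⟨hp, Finset.mem_univ _⟩, rfl⟩

lemma mem_treeOf {d : ℕ} {I : Finset (List (Fin d))} (hI : PC I) (w : List (Fin d)) :
    w ∈ (treeOf I hI).words ↔ w = [] ∨ ∃ u ∈ I, ∃ j : Fin d, w = u ++ [j] := by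
  simp only [treeOf, Finset.mem_insert, Finset.mem_image, Finset.mem_product]
  constructor
  · rintro (rfl | ⟨⟨p, j⟩, ⟨hp, -⟩, rfl⟩)
    · exact Or.inl rfl
    · exact Or.inr ⟨p, hp, j, rfl⟩
  · rintro (rfl | ⟨u, hu, j, rfl⟩)
    · exact Or.inl rfl
    · exact Or.inr ⟨⟨u, j⟩, ⟨hu, Finset.mem_univ _⟩, rfl⟩

lemma isInternal_treeOf {d : ℕ} (hd : 1 ≤ d) {I : Finset (List (Fin d))} (hI : PC I)
    (u : List (Fin d)) : isInternal (treeOf I hI) u ↔ u ∈ I := by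
  constructor
  · rintro ⟨-, j, hj⟩
    rw [mem_treeOf] at hj
    rcases hj with h | ⟨p, hp, k, he⟩
    · simp at h
    · obtain ⟨rfl, -⟩ : u = p ∧ j = k := by
        have := List.append_inj' he rfl
        simpa using this
      exact hp
  · intro hu
    have hmem : u ∈ (treeOf I hI).words := by
      rw [mem_treeOf]
      rcases eq_or_ne u [] with rfl | hne
      · exact Or.inl rfl
      · exact Or.inr ⟨u.dropLast, hI u hu _ (List.dropLast_prefix u), u.getLast hne,
          (List.dropLast_append_getLast hne).symm⟩
    refine ⟨hmem, ⟨0, hd⟩, ?_⟩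
    rw [mem_treeOf]
    exact Or.inr ⟨u, hu, _, rfl⟩

lemma intF_treeOf {d : ℕ} (hd : 1 ≤ d) {I : Finset (List (Fin d))} (hI : PC I) :
    intF (treeOf I hI) = I := by
  ext u; rw [mem_intF, isInternal_treeOf hd]

lemma treeOf_intF {d : ℕ} (T : DaryTree d) : treeOf (intF T) (pc_intF T) = T := by
  apply DaryTree.ext'
  ext w
  rw [mem_treeOf]
  constructor
  · rintro (rfl | ⟨u, hu, j, rfl⟩)
    · exact T.nil_mem
    · rw [mem_intF] at hu
      obtain ⟨-, k, hk⟩ := hu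
      exact T.complete u k hk j
  · intro hw
    rcases eq_or_ne w [] with rfl | hne
    · exact Or.inl rfl
    · refine Or.inr ⟨w.dropLast, ?_, w.getLast hne, (List.dropLast_append_getLast hne).symm⟩
      rw [mem_intF]
      refine ⟨T.prefix_closed w _ hw (List.dropLast_prefix w), w.getLast hne, ?_⟩
      rwa [List.dropLast_append_getLast hne]

/-- The key equivalence: trees with n internal nodes ≃ prefix-closed finsets of size n -/
noncomputable def treeEquivPC (d n : ℕ) (hd : 1 ≤ d) :
    {T : DaryTree d // internalCount T = n} ≃
      {I : Finset (List (Fin d)) // PC I ∧ I.card = n} where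
  toFun T := ⟨intF T.1, pc_intF T.1, by rw [← internalCount_eq]; exact T.2⟩
  invFun I := ⟨treeOf I.1 I.2.1, by
    rw [internalCount_eq, intF_treeOf hd]; exact I.2.2⟩
  left_inv T := Subtype.ext (treeOf_intF T.1)
  right_inv I := Subtype.ext (intF_treeOf hd I.2.1)
end S1

section S2
variable {d : ℕ}


lemma valid_iff_blocky_one {l : List Bool} : Valid d l ↔ Blocky d 1 l := by
  unfold Valid Blocky
  constructor <;> exact fun ⟨h1, h2⟩ => ⟨h1, fun m hm => by have := h2 m hm; omega⟩

lemma blocky_zero {l : List Bool} : Blocky d 0 l ↔ l = [] := by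
  constructor
  · rintro ⟨h1, h2⟩
    by_contra hne
    have hlen : 0 < l.length := List.length_pos_iff.mpr hne
    have := h2 0 hlen
    simp at this
  · rintro rfl; exact ⟨by simp, by simp⟩

lemma valid_append_blocky {k : ℕ} {b r : List Bool} (hb : Valid d b) (hr : Blocky d k r) :
    Blocky d (k + 1) (b ++ r) := by
  obtain ⟨hb1, hb2⟩ := hb
  obtain ⟨hr1, hr2⟩ := hr
  constructor
  · rw [List.length_append, List.count_append, Nat.mul_add]
    omega
  · intro m hm
    simp only [List.length_append] at hm
    rcases lt_or_ge m b.length with h | h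
    · rw [List.take_append_of_le_length (le_of_lt h)]
      have := hb2 m h
      omega
    · obtain ⟨m', rfl⟩ := Nat.exists_eq_add_of_le h
      have htk : (b ++ r).take (b.length + m') = b ++ r.take m' := by simp [List.take_append]
      rw [htk, List.count_append, Nat.mul_add]
      have hm' : m' < r.length := by omega
      have := hr2 m' hm'
      omega

lemma blocky_parse {k : ℕ} {l : List Bool} (hl : Blocky d (k + 1) l) :
    ∃ b r, Valid d b ∧ Blocky d k r ∧ l = b ++ r := by
  obtain ⟨h1, h2⟩ := hl
  have hex : ∃ m, m ≤ l.length ∧ d * ((l.take m).count true) + 1 ≤ m := by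
    refine ⟨l.length, le_rfl, ?_⟩
    rw [List.take_length]
    omega
  classical
  obtain ⟨hm₀le, hm₀⟩ := Nat.find_spec hex
  set m₀ := Nat.find hex with hm₀def
  have hpos : 0 < m₀ := by
    rcases Nat.eq_zero_or_pos m₀ with h | h
    · rw [h] at hm₀; simp at hm₀
    · exact h
  have hmin : ∀ m, m < m₀ → m ≤ l.length → m ≤ d * ((l.take m).count true) := by
    intro m hm hmle
    have h' := Nat.find_min hex hm
    push_neg at h'
    have := h' hmle
    omega
  have hprev : m₀ - 1 ≤ d * ((l.take (m₀ - 1)).count true) := hmin _ (by omega) (by omega)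
  have hstep : (l.take m₀).count true ≤ (l.take (m₀ - 1)).count true + 1 := by
    have he : l.take m₀ = l.take (m₀ - 1) ++ (l.drop (m₀ - 1)).take 1 := by
      rw [← List.take_add]
      congr 1
      omega
    rw [he, List.count_append]
    have h5 : ((l.drop (m₀ - 1)).take 1).count true ≤ 1 := by
      calc ((l.drop (m₀ - 1)).take 1).count true
          ≤ ((l.drop (m₀ - 1)).take 1).length := List.count_le_length
        _ ≤ 1 := List.length_take_le _ _
    omega
  have hmono : d * (l.take (m₀ - 1)).count true ≤ d * (l.take m₀).count true := by
    apply Nat.mul_le_mul_left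
    have : l.take (m₀ - 1) = (l.take m₀).take (m₀ - 1) := by
      rw [List.take_take, min_eq_left (by omega)]
    rw [this]
    exact ((List.take_sublist _ _).count_le _)
  have heq : m₀ = d * ((l.take m₀).count true) + 1 := by
    have h6 : d * (l.take m₀).count true ≤ d * ((l.take (m₀-1)).count true + 1) :=
      Nat.mul_le_mul_left _ hstep
    rw [Nat.mul_add] at h6
    omega
  have hcntl : l.count true = (l.take m₀).count true + (l.drop m₀).count true := by
    conv_lhs => rw [← List.take_append_drop m₀ l]
    exact List.count_append
  refine ⟨l.take m₀, l.drop m₀, ⟨?_, ?_⟩, ⟨?_, ?_⟩, (List.take_append_drop m₀ l).symm⟩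
  · rw [List.length_take, min_eq_left hm₀le]; exact heq
  · intro m hm
    rw [List.length_take, min_eq_left hm₀le] at hm
    rw [List.take_take, min_eq_left (le_of_lt hm)]
    exact hmin m hm (by omega)
  · rw [List.length_drop]
    rw [hcntl, Nat.mul_add] at h1
    omega
  · intro m hm
    rw [List.length_drop] at hm
    have h3 := h2 (m₀ + m) (by omega)
    have htk : l.take (m₀ + m) = l.take m₀ ++ (l.drop m₀).take m := List.take_add
    rw [htk, List.count_append, Nat.mul_add] at h3
    omega
end S2

section S3
variable {d : ℕ}
/-- uniqueness of the leading valid block -/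
lemma valid_unique_prefix {b b' r r' : List Bool} (hb : Valid d b) (hb' : Valid d b')
    (h : b ++ r = b' ++ r') : b = b' := by
  wlog hle : b.length ≤ b'.length generalizing b b' r r'
  · exact (this hb' hb h.symm (by omega)).symm
  have hpre : b = b'.take b.length := by
    have h2 : (b' ++ r').take b.length = b'.take b.length :=
      List.take_append_of_le_length hle
    rw [← h2, ← h]
    exact List.take_left.symm
  rcases eq_or_lt_of_le hle with heq | hlt
  · rw [hpre, heq, List.take_length]
  · exfalso
    have := hb'.2 b.length (by omega)
    rw [← hpre] at this
    have := hb.1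
    omega


lemma J_succ {k : ℕ} (f : Fin (k + 1) → List Bool) : J f = f 0 ++ J (f ∘ Fin.succ) := by
  simp [J, List.ofFn_succ, Function.comp_def]

lemma blocky_J {k : ℕ} {f : Fin k → List Bool} (hf : ∀ i, Valid d (f i)) :
    Blocky d k (J f) := by
  induction k with
  | zero => rw [blocky_zero]; simp [J]
  | succ k ih =>
    rw [J_succ]
    exact valid_append_blocky (hf 0) (ih (fun i => hf i.succ))

lemma J_surj {k : ℕ} {l : List Bool} (hl : Blocky d k l) :
    ∃ f : Fin k → List Bool, (∀ i, Valid d (f i)) ∧ l = J f := by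
  induction k generalizing l with
  | zero =>
    rw [blocky_zero] at hl
    exact ⟨fun i => [], fun i => i.elim0, by simp [hl, J]⟩
  | succ k ih =>
    obtain ⟨b, r, hb, hr, rfl⟩ := blocky_parse hl
    obtain ⟨f, hf, rfl⟩ := ih hr
    refine ⟨Fin.cons b f, ?_, ?_⟩
    · intro i
      induction i using Fin.cases with
      | zero => exact hb
      | succ i => simpa using hf i
    · rw [J_succ]
      simp [Function.comp_def, Fin.cons_succ, J]

lemma J_inj {k : ℕ} {f g : Fin k → List Bool} (hf : ∀ i, Valid d (f i))
    (hg : ∀ i, Valid d (g i)) (h : J f = J g) : f = g := by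
  induction k with
  | zero => funext i; exact i.elim0
  | succ k ih =>
    rw [J_succ, J_succ] at h
    have h0 : f 0 = g 0 := valid_unique_prefix (hf 0) (hg 0) h
    rw [h0] at h
    have htail := ih (fun i => hf i.succ) (fun i => hg i.succ)
      (List.append_cancel_left h)
    funext i
    induction i using Fin.cases with
    | zero => exact h0
    | succ i => exact congrFun htail i
end S3

section S4
variable {d : ℕ}
lemma valid_cons_iff {r : List Bool} : Valid d (true :: r) ↔ Blocky d d r := by
  unfold Valid Blocky
  simp only [List.length_cons, List.count_cons, if_pos rfl]
  constructor
  · rintro ⟨h1, h2⟩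
    refine ⟨by simp at h1; rw [Nat.mul_add] at h1; omega, ?_⟩
    intro m hm
    have := h2 (m + 1) (by omega)
    rw [List.take_succ_cons, List.count_cons] at this
    simp at this
    rw [Nat.mul_add] at this
    omega
  · rintro ⟨h1, h2⟩
    refine ⟨by simp; rw [Nat.mul_add]; omega, ?_⟩
    intro m hm
    cases m with
    | zero => omega
    | succ m =>
      have := h2 m (by omega)
      rw [List.take_succ_cons, List.count_cons]
      simp
      rw [Nat.mul_add]
      omega

lemma count_J {k : ℕ} (f : Fin k → List Bool) :
    (J f).count true = ∑ i, (f i).count true := by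
  induction k with
  | zero => simp [J]
  | succ k ih =>
    have : J f = f 0 ++ J (f ∘ Fin.succ) := by
      simp [J, List.ofFn_succ, Function.comp_def]
    rw [this, List.count_append, ih, Fin.sum_univ_succ]
    rfl

/-- the sequence-side recurrence bijection -/
lemma seq_recurrence (d n : ℕ) (hd : 1 ≤ d) :
    Nat.card {l : List Bool // Valid d l ∧ l.count true = n + 1} =
      Nat.card {f : Fin d → {l : List Bool // Valid d l} // ∑ i, (f i).1.count true = n} := by
  apply Nat.card_congr
  symm
  refine Equiv.ofBijective (fun f => ⟨true :: J (fun i => (f.1 i).1), ?_, ?_⟩) ⟨?_, ?_⟩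
  · exact valid_cons_iff.mpr (blocky_J (fun i => (f.1 i).2))
  · rw [List.count_cons, count_J]
    simp [f.2]
  · rintro ⟨f, hf⟩ ⟨g, hg⟩ h
    simp only [Subtype.mk.injEq, List.cons.injEq, true_and] at h
    have := J_inj (fun i => (f i).2) (fun i => (g i).2) h
    exact Subtype.ext (funext fun i => Subtype.ext (congrFun this i))
  · rintro ⟨l, hl, hc⟩
    have hlen : 2 ≤ l.length := by
      have := hl.1
      have : l.length = d * (n + 1) + 1 := by rw [this, hc]
      nlinarith
    obtain ⟨x, r, rfl⟩ : ∃ x r, l = x :: r := by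
      cases l with
      | nil => simp at hlen
      | cons x r => exact ⟨x, r, rfl⟩
    have hx : x = true := by
      by_contra hxf
      have hxf : x = false := by cases x <;> simp_all
      subst hxf
      have := hl.2 1 (by omega)
      simp at this
    subst hx
    obtain ⟨f, hf, hJ⟩ := J_surj (valid_cons_iff.mp hl)
    refine ⟨⟨fun i => ⟨f i, hf i⟩, ?_⟩, ?_⟩
    · have hc' : r.count true = n := by
        rw [List.count_cons] at hc
        simp at hc
        exact hc
      rw [hJ, count_J] at hc'
      simpa using hc' 
    · simp only [Subtype.mk.injEq, List.cons.injEq, true_and]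
      exact hJ.symm
end S4

section S5
variable {d : ℕ}
/-- glue d prefix-closed sets as children of a root -/
def glue (f : Fin d → Finset (List (Fin d))) : Finset (List (Fin d)) :=
  insert [] (Finset.univ.biUnion fun j : Fin d => (f j).image (j :: ·))

lemma mem_glue (f : Fin d → Finset (List (Fin d))) (w : List (Fin d)) :
    w ∈ glue f ↔ w = [] ∨ ∃ j v, v ∈ f j ∧ w = j :: v := by
  simp only [glue, Finset.mem_insert, Finset.mem_biUnion, Finset.mem_univ, true_and,
    Finset.mem_image]
  constructor
  · rintro (rfl | ⟨j, v, hv, rfl⟩)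
    · exact Or.inl rfl
    · exact Or.inr ⟨j, v, hv, rfl⟩
  · rintro (rfl | ⟨j, v, hv, rfl⟩)
    · exact Or.inl rfl
    · exact Or.inr ⟨j, v, hv, rfl⟩

lemma cons_mem_glue (f : Fin d → Finset (List (Fin d))) (j : Fin d) (v : List (Fin d)) :
    j :: v ∈ glue f ↔ v ∈ f j := by
  rw [mem_glue]
  constructor
  · rintro (h | ⟨j', v', hv', he⟩)
    · simp at h
    · obtain ⟨rfl, rfl⟩ : j' = j ∧ v' = v := by
        have := List.cons.injEq j v j' v' ▸ he
        simp at he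
        exact ⟨he.1.symm, he.2.symm⟩
      exact hv'
  · intro hv
    exact Or.inr ⟨j, v, hv, rfl⟩

lemma pc_glue {f : Fin d → Finset (List (Fin d))} (hf : ∀ j, PC (f j)) : PC (glue f) := by
  intro u hu v hv
  rw [mem_glue] at hu
  rcases hu with rfl | ⟨j, u', hu', rfl⟩
  · rw [List.prefix_nil.mp hv, mem_glue]; exact Or.inl rfl
  · cases v with
    | nil => rw [mem_glue]; exact Or.inl rfl
    | cons x v' =>
      obtain ⟨rfl, hv'⟩ : x = j ∧ v' <+: u' := by
        obtain ⟨t, ht⟩ := hv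
        simp at ht
        exact ⟨ht.1, ⟨t, ht.2⟩⟩
      rw [cons_mem_glue]
      exact hf _ u' hu' v' hv'

lemma card_glue (f : Fin d → Finset (List (Fin d))) :
    (glue f).card = 1 + ∑ j, (f j).card := by
  have hnot : ([] : List (Fin d)) ∉ Finset.univ.biUnion fun j : Fin d => (f j).image (j :: ·) := by
    simp
  have hdisj : ∀ x ∈ (Finset.univ : Finset (Fin d)), ∀ y ∈ Finset.univ, x ≠ y →
      Disjoint ((f x).image (x :: ·)) ((f y).image (y :: ·)) := by
    intro x _ y _ hxy
    simp only [Finset.disjoint_left, Finset.mem_image]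
    rintro a ⟨u, -, rfl⟩ ⟨v, -, he⟩
    simp at he
    exact hxy (he.1.symm)
  calc (glue f).card
      = (Finset.univ.biUnion fun j : Fin d => (f j).image (j :: ·)).card + 1 :=
        Finset.card_insert_of_notMem hnot
    _ = (∑ j, ((f j).image (j :: ·)).card) + 1 := by rw [Finset.card_biUnion hdisj]
    _ = 1 + ∑ j, (f j).card := by
        rw [add_comm]
        congr 1
        exact Finset.sum_congr rfl fun j _ =>
          Finset.card_image_of_injective _ (fun a b h => by simpa using h)

/-- child subtree extraction -/
def childSet (j : Fin d) (I : Finset (List (Fin d))) : Finset (List (Fin d)) :=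
  (I.filter (fun w => w.head? = some j)).image List.tail

lemma mem_childSet {j : Fin d} {I : Finset (List (Fin d))} (v : List (Fin d)) :
    v ∈ childSet j I ↔ j :: v ∈ I := by
  simp only [childSet, Finset.mem_image, Finset.mem_filter]
  constructor
  · rintro ⟨w, ⟨hw, hh⟩, rfl⟩
    cases w with
    | nil => simp at hh
    | cons x t =>
      simp at hh
      subst hh
      exact hw
  · intro h
    exact ⟨j :: v, ⟨h, rfl⟩, rfl⟩

lemma pc_childSet {j : Fin d} {I : Finset (List (Fin d))} (hI : PC I) : PC (childSet j I) := by
  intro u hu v hv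
  rw [mem_childSet] at hu ⊢
  exact hI _ hu _ ((List.prefix_cons_inj j).mpr hv)

/-- the tree-side recurrence bijection -/
lemma pc_recurrence (d n : ℕ) :
    Nat.card {I : Finset (List (Fin d)) // PC I ∧ I.card = n + 1} =
      Nat.card {f : Fin d → {I : Finset (List (Fin d)) // PC I} // ∑ j, (f j).1.card = n} := by
  apply Nat.card_congr
  symm
  refine Equiv.ofBijective (fun f => ⟨glue (fun j => (f.1 j).1), pc_glue (fun j => (f.1 j).2), ?_⟩)
    ⟨?_, ?_⟩
  · rw [card_glue]
    rw [f.2]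
    omega
  · rintro ⟨f, hf⟩ ⟨g, hg⟩ h
    simp only [Subtype.mk.injEq] at h
    refine Subtype.ext (funext fun j => Subtype.ext (Finset.ext fun v => ?_))
    rw [← cons_mem_glue (fun j => (f j).1) j v, ← cons_mem_glue (fun j => (g j).1) j v, h]
  · rintro ⟨I, hPC, hcard⟩
    have hnil : [] ∈ I := by
      have : I.Nonempty := Finset.card_pos.mp (by omega)
      obtain ⟨u, hu⟩ := this
      exact hPC u hu [] (List.nil_prefix)
    have hglue : glue (fun j => childSet j I) = I := by
      ext w
      cases w with
      | nil => simp [mem_glue, hnil]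
      | cons x v =>
        rw [cons_mem_glue, mem_childSet]
    have hsum : ∑ j, (childSet j I).card = n := by
      have := card_glue (fun j => childSet j I)
      rw [hglue, hcard] at this
      omega
    exact ⟨⟨fun j => ⟨childSet j I, pc_childSet hPC⟩, hsum⟩, Subtype.ext hglue⟩
end S5

lemma nat_card_sigma {ι : Type*} [Fintype ι] (g : ι → Type*) [hg : ∀ i, Finite (g i)] :
    Nat.card (Σ i, g i) = ∑ i, Nat.card (g i) := by
  letI : ∀ i, Fintype (g i) := fun i => Fintype.ofFinite _
  rw [Nat.card_eq_fintype_card, Fintype.card_sigma]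
  exact Finset.sum_congr rfl fun i _ => (Nat.card_eq_fintype_card).symm

lemma card_tuple_eq_sum {α : Type*} (w : α → ℕ) (hf : ∀ m, Finite {a : α // w a = m})
    (k n : ℕ) :
    Nat.card {f : Fin k → α // ∑ i, w (f i) = n} =
      ∑ v ∈ Finset.Nat.antidiagonalTuple k n, ∏ i, Nat.card {a : α // w a = v i} := by
  classical
  set A := {f : Fin k → α // ∑ i, w (f i) = n}
  let π : A → ↥(Finset.Nat.antidiagonalTuple k n) :=
    fun f => ⟨fun i => w (f.1 i), Finset.Nat.mem_antidiagonalTuple.mpr f.2⟩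
  have e1 : A ≃ Σ v : ↥(Finset.Nat.antidiagonalTuple k n), {a : A // π a = v} :=
    (Equiv.sigmaFiberEquiv π).symm
  have e2 : ∀ v : ↥(Finset.Nat.antidiagonalTuple k n),
      {a : A // π a = v} ≃ ∀ i, {a : α // w a = (v : Fin k → ℕ) i} := by
    intro v
    refine Equiv.trans ?_ (Equiv.subtypePiEquivPi (p := fun i a => w a = (v : Fin k → ℕ) i))
    refine ⟨fun a => ⟨a.1.1, fun i => congrFun (congrArg Subtype.val a.2) i⟩,
      fun g => ⟨⟨g.1, ?_⟩, ?_⟩, fun a => ?_, fun g => ?_⟩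
    · have hv := Finset.Nat.mem_antidiagonalTuple.mp v.2
      calc ∑ i, w (g.1 i) = ∑ i, (v : Fin k → ℕ) i := Finset.sum_congr rfl fun i _ => g.2 i
        _ = n := hv
    · exact Subtype.ext (funext g.2)
    · exact Subtype.ext (Subtype.ext rfl)
    · exact Subtype.ext rfl
  haveI : ∀ v : ↥(Finset.Nat.antidiagonalTuple k n), Finite {a : A // π a = v} := by
    intro v
    exact Finite.of_equiv _ (e2 v).symm
  calc Nat.card A = Nat.card (Σ v : ↥(Finset.Nat.antidiagonalTuple k n), {a : A // π a = v}) :=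
        Nat.card_congr e1
    _ = ∑ v : ↥(Finset.Nat.antidiagonalTuple k n), Nat.card {a : A // π a = v} :=
        nat_card_sigma _
    _ = ∑ v : ↥(Finset.Nat.antidiagonalTuple k n), ∏ i, Nat.card {a : α // w a = (v : Fin k → ℕ) i} := by
        refine Finset.sum_congr rfl fun v _ => ?_
        rw [Nat.card_congr (e2 v), Nat.card_pi]
    _ = ∑ v ∈ Finset.Nat.antidiagonalTuple k n, ∏ i, Nat.card {a : α // w a = v i} := by
        exact Finset.sum_coe_sort (Finset.Nat.antidiagonalTuple k n)
          (fun v => ∏ i, Nat.card {a : α // w a = v i})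

lemma card_tuple {α β : Type*} (wa : α → ℕ) (wb : β → ℕ)
    (hfa : ∀ m, Finite {a : α // wa a = m}) (hfb : ∀ m, Finite {b : β // wb b = m})
    (k n : ℕ) (h : ∀ m, m ≤ n → Nat.card {a : α // wa a = m} = Nat.card {b : β // wb b = m}) :
    Nat.card {f : Fin k → α // ∑ i, wa (f i) = n} =
      Nat.card {f : Fin k → β // ∑ i, wb (f i) = n} := by
  rw [card_tuple_eq_sum wa hfa, card_tuple_eq_sum wb hfb]
  refine Finset.sum_congr rfl fun v hv => Finset.prod_congr rfl fun i _ => ?_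
  have hvi : v i ≤ n := by
    have hv' := Finset.Nat.mem_antidiagonalTuple.mp hv
    calc v i ≤ ∑ j, v j := Finset.single_le_sum (fun j _ => Nat.zero_le _) (Finset.mem_univ i)
      _ = n := hv'
  exact h _ hvi

section Cycle

/-- the periodized sequence -/
def cseq (b : ZMod N → Bool) : ℕ → Bool := fun k => b (k : ZMod N)

/-- number of `true`s in window `[k, k+m)` -/
def W (b : ZMod N → Bool) (k m : ℕ) : ℕ :=
  ∑ j ∈ Finset.range m, if cseq b (k + j) then 1 else 0

lemma W_add (b : ZMod N → Bool) (k m m' : ℕ) :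
    W b k (m + m') = W b k m + W b (k + m) m' := by
  induction m' with
  | zero => simp [W]
  | succ m' ih =>
    have h1 : W b k (m + (m' + 1)) = W b k (m + m') + (if cseq b (k + (m + m')) then 1 else 0) := by
      rw [← Nat.add_assoc]
      exact Finset.sum_range_succ _ _
    have h2 : W b (k + m) (m' + 1) = W b (k + m) m' + (if cseq b (k + m + m') then 1 else 0) :=
      Finset.sum_range_succ _ _
    rw [h1, ih, h2, ← Nat.add_assoc]
    omega

lemma cseq_period [NeZero N] (b : ZMod N → Bool) (k : ℕ) : cseq b (k + N) = cseq b k := by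
  unfold cseq
  congr 1
  push_cast [ZMod.natCast_self]
  ring

lemma W_period [NeZero N] (b : ZMod N → Bool) (k k' : ℕ) : W b (k + N) k' = W b k k' := by
  unfold W
  refine Finset.sum_congr rfl fun j _ => ?_
  have : k + N + j = k + j + N := by ring
  rw [this, cseq_period]

def finZModEquiv (N : ℕ) [NeZero N] : Fin N ≃ ZMod N where
  toFun i := (i.val : ZMod N)
  invFun z := ⟨z.val, z.val_lt⟩
  left_inv i := Fin.ext (ZMod.val_cast_of_lt i.isLt)
  right_inv z := ZMod.natCast_rightInverse z

lemma W_zero_N [NeZero N] (b : ZMod N → Bool)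
    (hb : (Finset.univ.filter (fun i => b i = true)).card = n) : W b 0 N = n := by
  rw [W, ← hb, Finset.card_filter]
  rw [Finset.sum_range fun j => if cseq b (0 + j) then 1 else 0]
  exact Fintype.sum_equiv (finZModEquiv N) _ _ (fun i => by
    simp [cseq, finZModEquiv]; congr)

lemma W_N [NeZero N] (b : ZMod N → Bool)
    (hb : (Finset.univ.filter (fun i => b i = true)).card = n) (k : ℕ) : W b k N = n := by
  have h1 : W b 0 (k + N) = W b 0 k + W b k N := by
    have := W_add b 0 k N; simpa using this
  have h2 : W b 0 (N + k) = W b 0 N + W b N k := by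
    have := W_add b 0 N k; simpa using this
  have h3 : W b N k = W b 0 k := by
    have := W_period (k' := k) b 0; simpa using this
  rw [W_zero_N b hb] at h2
  rw [Nat.add_comm k N, h2, h3] at h1
  omega

/-- prefix-sum walk -/
noncomputable def D (d : ℕ) (b : ZMod N → Bool) (k : ℕ) : ℤ := (d * W b 0 k : ℤ) - k

lemma D_diff (d : ℕ) (b : ZMod N → Bool) (k m : ℕ) :
    D d b (k + m) - D d b k = (d * W b k m : ℤ) - m := by
  unfold D
  rw [W_add b 0 k m]
  push_cast
  ring

lemma D_period [NeZero N] (d : ℕ) (b : ZMod N → Bool) (hN : N = d * n + 1)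
    (hb : (Finset.univ.filter (fun i => b i = true)).card = n) (k : ℕ) :
    D d b (k + N) = D d b k - 1 := by
  have := D_diff d b k N
  rw [W_N b hb k] at this
  have hN' : (N : ℤ) = d * n + 1 := by rw [hN]; push_cast; ring
  omega

/-- the ballot condition for the rotation starting at `k` -/
def G (d : ℕ) (b : ZMod N → Bool) (k : ℕ) : Prop := ∀ m, m < N → m ≤ d * W b k m

lemma G_iff_D (d : ℕ) (b : ZMod N → Bool) (k : ℕ) :
    G d b k ↔ ∀ m, m < N → D d b k ≤ D d b (k + m) := by
  unfold G
  constructor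
  · intro h m hm
    have h2 := D_diff d b k m
    have h3 := h m hm
    have : (m : ℤ) ≤ d * W b k m := by exact_mod_cast h3
    omega
  · intro h m hm
    have h2 := D_diff d b k m
    have h3 := h m hm
    have : (m : ℤ) ≤ d * W b k m := by omega
    exact_mod_cast this

/-- existence and uniqueness of the good starting point -/
lemma exists_unique_G [NeZero N] (d : ℕ) (b : ZMod N → Bool) (hN : N = d * n + 1)
    (hb : (Finset.univ.filter (fun i => b i = true)).card = n) :
    ∃ k₀, k₀ < N ∧ G d b k₀ ∧ ∀ k, k < N → G d b k → k = k₀ := by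
  classical
  have hNpos : 0 < N := Nat.pos_of_ne_zero (NeZero.ne N)
  have hex : ∃ k, k < N ∧ ∀ j, j < N → D d b k ≤ D d b j := by
    obtain ⟨k, hk, hmin⟩ := Finset.exists_min_image (Finset.range N) (D d b)
      ⟨0, Finset.mem_range.mpr hNpos⟩
    exact ⟨k, Finset.mem_range.mp hk, fun j hj => hmin j (Finset.mem_range.mpr hj)⟩
  obtain ⟨hk₀N, hk₀min⟩ := Nat.find_spec hex
  set k₀ := Nat.find hex with hk₀def
  have hstrict : ∀ j, j < k₀ → D d b k₀ < D d b j := by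
    intro j hj
    have h' := Nat.find_min hex hj
    push_neg at h'
    obtain ⟨j', hj', hlt⟩ := h' (lt_trans hj hk₀N)
    calc D d b k₀ ≤ D d b j' := hk₀min j' hj'
      _ < D d b j := hlt
  refine ⟨k₀, hk₀N, ?_, ?_⟩
  · rw [G_iff_D]
    intro m hm
    rcases lt_or_ge (k₀ + m) N with h | h
    · exact hk₀min _ h
    · have hj : k₀ + m - N < k₀ := by omega
      have he : k₀ + m = (k₀ + m - N) + N := by omega
      rw [he, D_period d b hN hb]
      have := hstrict _ hj
      omega
  · intro k hkN hGk
    rw [G_iff_D] at hGk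
    by_contra hne
    rcases lt_or_gt_of_ne hne with hlt | hgt
    · -- k < k₀
      have h1 := hGk (k₀ - k) (by omega)
      rw [Nat.add_sub_cancel' (le_of_lt hlt)] at h1
      have := hstrict k hlt
      omega
    · -- k₀ < k
      have h1 := hGk (k₀ + N - k) (by omega)
      rw [Nat.add_sub_cancel' (by omega : k ≤ k₀ + N), D_period d b hN hb] at h1
      have h2 := hk₀min k hkN
      omega

/-- the rotation of `b` starting at `g` -/
def rot (b : ZMod N → Bool) (g : ZMod N) : List Bool :=
  (List.range N).map (fun j => cseq b (g.val + j))

lemma rot_length (b : ZMod N → Bool) (g : ZMod N) : (rot b g).length = N := by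
  simp [rot]

lemma rot_count (b : ZMod N → Bool) (g : ZMod N) :
    (rot b g).count true = W b g.val N := by
  unfold rot W
  rw [List.count, List.countP_map, ← countP_range]
  congr 1
  funext j
  simp

lemma rot_take_count (b : ZMod N → Bool) (g : ZMod N) (m : ℕ) (hm : m ≤ N) :
    ((rot b g).take m).count true = W b g.val m := by
  unfold rot W
  rw [← List.map_take, List.take_range, min_eq_left hm]
  rw [List.count, List.countP_map, ← countP_range]
  congr 1
  funext j
  simp

lemma valid_rot_iff [NeZero N] {d n : ℕ} (b : ZMod N → Bool) (hN : N = d * n + 1)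
    (hb : (Finset.univ.filter (fun i => b i = true)).card = n) (g : ZMod N) :
    Valid d (rot b g) ↔ G d b g.val := by
  unfold Valid G
  rw [rot_length, rot_count, W_N b hb]
  constructor
  · intro ⟨h1, h2⟩ m hm
    have := h2 m (by omega)
    rwa [rot_take_count b g m (le_of_lt hm)] at this
  · intro h
    refine ⟨hN, fun m hm => ?_⟩
    rw [rot_take_count b g m (by omega)]
    exact h m hm

lemma existsUnique_valid_rot [NeZero N] {d n : ℕ} (b : ZMod N → Bool) (hN : N = d * n + 1)
    (hb : (Finset.univ.filter (fun i => b i = true)).card = n) :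
    ∃! g : ZMod N, Valid d (rot b g) := by
  obtain ⟨k₀, hk₀N, hG, huniq⟩ := exists_unique_G d b hN hb
  refine ⟨(k₀ : ZMod N), ?_, ?_⟩
  · show Valid d (rot b (k₀ : ZMod N))
    rw [valid_rot_iff b hN hb, ZMod.val_cast_of_lt hk₀N]
    exact hG
  · intro g hg
    rw [valid_rot_iff b hN hb] at hg
    have := huniq g.val g.val_lt hg
    rw [← this]
    exact (ZMod.natCast_rightInverse g).symm

lemma count_eq_sum_getD (l : List Bool) :
    l.count true = ∑ j ∈ Finset.range l.length, if l.getD j false then 1 else 0 := by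
  induction l with
  | nil => simp
  | cons x t ih =>
    rw [List.count_cons, List.length_cons, Finset.sum_range_succ']
    simp only [List.getD_cons_succ, List.getD_cons_zero, ← ih]
    cases x <;> simp

/-- decode: place list `l` around the cycle starting at `g` -/
def theta (l : List Bool) (g : ZMod N) : ZMod N → Bool :=
  fun i => l.getD (i - g).val false

lemma theta_card [NeZero N] (l : List Bool) (hlen : l.length = N) (g : ZMod N) :
    (Finset.univ.filter (fun i => theta l g i = true)).card = l.count true := by
  rw [Finset.card_filter]
  have h1 : ∑ i : ZMod N, (if theta l g i then 1 else 0) =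
      ∑ z : ZMod N, (if l.getD z.val false then 1 else 0) :=
    Fintype.sum_equiv (Equiv.subRight g) _ _ (fun i => rfl)
  rw [h1]
  have h2 : ∑ z : ZMod N, (if l.getD z.val false then 1 else 0) =
      ∑ j : Fin N, (if l.getD j.val false then 1 else 0) := by
    refine Fintype.sum_equiv (finZModEquiv N).symm _ _ (fun z => ?_)
    simp [finZModEquiv]
  rw [h2, count_eq_sum_getD, hlen, Finset.sum_range]

lemma rot_theta [NeZero N] (l : List Bool) (hlen : l.length = N) (g : ZMod N) :
    rot (theta l g) g = l := by
  apply List.ext_getElem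
  · rw [rot_length, hlen]
  · intro i h1 h2
    rw [rot_length] at h1
    simp only [rot, cseq, theta, List.getElem_map, List.getElem_range]
    have hc : ((g.val + i : ℕ) : ZMod N) = g + (i : ℕ) := by
      push_cast
      rw [ZMod.natCast_rightInverse g]
    rw [hc, add_sub_cancel_left, ZMod.val_cast_of_lt h1]
    exact List.getD_eq_getElem l false h2

lemma theta_apply [NeZero N] (b : ZMod N → Bool) (g i : ZMod N) :
    theta (rot b g) g i = b i := by
  unfold theta rot cseq
  have hv : (i - g).val < N := ZMod.val_lt _
  rw [List.getD_eq_getElem _ false (by simpa using hv)]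
  simp only [List.getElem_map, List.getElem_range]
  congr 1
  push_cast
  rw [ZMod.natCast_rightInverse g, ZMod.natCast_rightInverse (i - g)]
  ring

/-- the counting theorem: valid sequences times `N` is `N.choose n` -/
theorem cycle_count {d n N : ℕ} (hN : N = d * n + 1) :
    Nat.card {l : List Bool // Valid d l ∧ l.count true = n} * N = N.choose n := by
  haveI : NeZero N := ⟨by omega⟩
  classical
  set X := {b : ZMod N → Bool // (Finset.univ.filter (fun i => b i = true)).card = n} with hX
  have keyEquiv : {l : List Bool // Valid d l ∧ l.count true = n} × ZMod N ≃ X := by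
    refine Equiv.ofBijective (fun p => ⟨theta p.1.1 p.2, ?_⟩) ⟨?_, ?_⟩
    · rw [theta_card p.1.1 (by have h1 := p.1.2.1.1; rw [p.1.2.2] at h1; omega) p.2]
      exact p.1.2.2
    · rintro ⟨⟨l, hl, hc⟩, g⟩ ⟨⟨l', hl', hc'⟩, g'⟩ h
      have hfun : theta l g = theta l' g' := congrArg Subtype.val h
      have hlen : l.length = N := by have h1 := hl.1; rw [hc] at h1; omega
      have hlen' : l'.length = N := by have h1 := hl'.1; rw [hc'] at h1; omega
      set b : ZMod N → Bool := theta l g with hb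
      have hbcard : (Finset.univ.filter (fun i => b i = true)).card = n := by
        rw [hb, theta_card l hlen g, hc]
      have hrot1 : rot b g = l := rot_theta l hlen g
      have hrot2 : rot b g' = l' := by rw [hfun]; exact rot_theta l' hlen' g'
      obtain ⟨g₀, -, huniq⟩ := existsUnique_valid_rot b hN hbcard
      have e1 : g = g₀ := huniq g (by show Valid d (rot b g); rw [hrot1]; exact hl)
      have e2 : g' = g₀ := huniq g' (by show Valid d (rot b g'); rw [hrot2]; exact hl')
      have : g = g' := by rw [e1, e2]
      subst this
      have : l = l' := by rw [← hrot1, ← hrot2]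
      simp [this]
    · rintro ⟨b, hb⟩
      obtain ⟨g, hg, -⟩ := existsUnique_valid_rot b hN hb
      refine ⟨⟨⟨rot b g, hg, ?_⟩, g⟩, ?_⟩
      · rw [rot_count, W_N b hb]
      · refine Subtype.ext (funext fun i => ?_)
        exact theta_apply b g i
  have hcard1 : Nat.card ({l : List Bool // Valid d l ∧ l.count true = n} × ZMod N) =
      Nat.card {l : List Bool // Valid d l ∧ l.count true = n} * N := by
    rw [Nat.card_prod]
    congr 1
    rw [Nat.card_eq_fintype_card, ZMod.card]
  rw [← hcard1, Nat.card_congr keyEquiv]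
  -- now compute card X
  have e1 : X ≃ {s : Finset (ZMod N) // s.card = n} := by
    refine ⟨fun b => ⟨Finset.univ.filter (fun i => b.1 i = true), b.2⟩,
      fun s => ⟨fun i => decide (i ∈ s.1), ?_⟩, fun b => ?_, fun s => ?_⟩
    · simp [s.2]
    · refine Subtype.ext (funext fun i => ?_)
      simp only [Finset.mem_filter, Finset.mem_univ, true_and]
      cases hbi : b.1 i <;> simp [hbi]
    · refine Subtype.ext ?_
      simp
  have e2 : {s : Finset (ZMod N) // s.card = n} ≃
      ↥((Finset.univ : Finset (ZMod N)).powersetCard n) :=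
    (Equiv.subtypeEquivRight (fun s => by
      rw [Finset.mem_powersetCard_univ])).symm
  rw [Nat.card_congr (e1.trans e2), Nat.card_eq_finsetCard,
    Finset.card_powersetCard, Finset.card_univ, ZMod.card]

end Cycle

lemma length_lt_card {d : ℕ} {I : Finset (List (Fin d))} (hI : PC I) {u : List (Fin d)}
    (hu : u ∈ I) : u.length < I.card := by
  have hsub : (Finset.range (u.length + 1)).image (fun k => u.take k) ⊆ I := by
    intro w hw
    simp only [Finset.mem_image, Finset.mem_range] at hw
    obtain ⟨k, -, rfl⟩ := hw
    exact hI u hu _ (List.take_prefix k u)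
  have hinj : Set.InjOn (fun k => u.take k) (Finset.range (u.length + 1)) := by
    intro j hj k hk h
    simp only [Finset.coe_range, Set.mem_Iio] at hj hk
    have hj' : (u.take j).length = j := by rw [List.length_take]; omega
    have hk' : (u.take k).length = k := by rw [List.length_take]; omega
    have h' : List.take j u = List.take k u := h
    rw [← hj', ← hk', h']
  have h1 : u.length + 1 = ((Finset.range (u.length + 1)).image (fun k => u.take k)).card := by
    rw [Finset.card_image_of_injOn hinj, Finset.card_range]
  have := Finset.card_le_card hsub
  omega

lemma finite_pc (d m : ℕ) : Finite {I : Finset (List (Fin d)) // PC I ∧ I.card = m} := by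
  classical
  have hfin : Finite {l : List (Fin d) // l.length < m} := by
    have := List.finite_length_lt (α := Fin d) m
    exact this.to_subtype
  refine Finite.of_injective
    (fun I => (fun l : {l : List (Fin d) // l.length < m} => decide (l.1 ∈ I.1))) ?_
  rintro ⟨I, hI, hIc⟩ ⟨J, hJ, hJc⟩ h
  refine Subtype.ext (Finset.ext fun w => ?_)
  constructor
  · intro hw
    have hlt : w.length < m := hIc ▸ length_lt_card hI hw
    have := congrFun h ⟨w, hlt⟩
    simpa [hw] using this.symm
  · intro hw
    have hlt : w.length < m := hJc ▸ length_lt_card hJ hw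
    have := congrFun h ⟨w, hlt⟩
    simpa [hw] using this

lemma finite_seq (d m : ℕ) : Finite {l : List Bool // Valid d l ∧ l.count true = m} := by
  have hfin : Finite {l : List Bool // l.length < d * m + 2} := by
    have := List.finite_length_lt (α := Bool) (d * m + 2)
    exact this.to_subtype
  refine Finite.of_injective
    (fun l => (⟨l.1, by have h1 := l.2.1.1; rw [l.2.2] at h1; omega⟩ :
      {l : List Bool // l.length < d * m + 2})) ?_
  rintro ⟨l, hl⟩ ⟨l', hl'⟩ h
  simpa using h

lemma pc_empty (d : ℕ) : PC (∅ : Finset (List (Fin d))) := by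
  intro u hu
  simp at hu

lemma card_pc_zero (d : ℕ) : Nat.card {I : Finset (List (Fin d)) // PC I ∧ I.card = 0} = 1 := by
  haveI : Unique {I : Finset (List (Fin d)) // PC I ∧ I.card = 0} :=
    { default := ⟨∅, pc_empty d, Finset.card_empty⟩
      uniq := fun I => Subtype.ext (Finset.card_eq_zero.mp I.2.2) }
  exact Nat.card_unique

lemma valid_single (d : ℕ) : Valid d [false] :=
  ⟨by simp, fun m hm => by
    simp only [List.length_singleton, Nat.lt_one_iff] at hm
    subst hm
    exact Nat.zero_le _⟩

lemma card_seq_zero (d : ℕ) : Nat.card {l : List Bool // Valid d l ∧ l.count true = 0} = 1 := by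
  haveI : Unique {l : List Bool // Valid d l ∧ l.count true = 0} :=
    { default := ⟨[false], valid_single d, by simp⟩
      uniq := by
        rintro ⟨l, hv, hc⟩
        refine Subtype.ext ?_
        have hlen : l.length = 1 := by have := hv.1; rw [hc] at this; omega
        obtain ⟨x, rfl⟩ := List.length_eq_one_iff.mp hlen
        cases x
        · rfl
        · simp at hc }
  exact Nat.card_unique

lemma main_count (d : ℕ) (hd : 1 ≤ d) (n : ℕ) :
    Nat.card {I : Finset (List (Fin d)) // PC I ∧ I.card = n} =
      Nat.card {l : List Bool // Valid d l ∧ l.count true = n} := by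
  induction n using Nat.strong_induction_on with
  | _ n ih =>
    match n with
    | 0 => rw [card_pc_zero, card_seq_zero]
    | Nat.succ n =>
      rw [pc_recurrence d n, seq_recurrence d n hd]
      refine card_tuple (fun I : {I : Finset (List (Fin d)) // PC I} => I.1.card)
        (fun l : {l : List Bool // Valid d l} => l.1.count true) ?_ ?_ d n ?_
      · intro m
        haveI := finite_pc d m
        exact Finite.of_equiv _
          (Equiv.subtypeSubtypeEquivSubtypeInter PC (fun I => I.card = m)).symm
      · intro m
        haveI := finite_seq d m
        exact Finite.of_equiv _
          (Equiv.subtypeSubtypeEquivSubtypeInter (Valid d) (fun l => l.count true = m)).symm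
      · intro m hm
        have e1 := Equiv.subtypeSubtypeEquivSubtypeInter (PC (d := d))
          (fun I : Finset (List (Fin d)) => I.card = m)
        have e2 := Equiv.subtypeSubtypeEquivSubtypeInter (Valid d)
          (fun l : List Bool => l.count true = m)
        rw [Nat.card_congr e1, Nat.card_congr e2]
        exact ih m (by omega)

end FussAux

/-- The number of `d`-ary rooted plane trees with `n` internal nodes is
`C(dn+1, n) / (dn+1)`. -/
theorem statement0 (n d : ℕ) (hd : 1 ≤ d) :
    Nat.card {T : DaryTree d // internalCount T = n} =
      (d * n + 1).choose n / (d * n + 1) := by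
  rw [Nat.card_congr (FussAux.treeEquivPC d n hd), FussAux.main_count d hd n,
    ← FussAux.cycle_count (d := d) (n := n) (N := d * n + 1) rfl,
    Nat.mul_div_cancel _ (by omega : 0 < d * n + 1)]
end

section
/- For all n ≥ 0 and d ≥ 2, with a(n,d) = C(dn+1,n)/(dn+1), the identity C((d-1)(n+1)+1, d-1) · a(n+1,d) = d · C(dn+d-1, d-1) · a(n,d) holds. -/
lemma dvd_choose_a (n d : ℕ) : (d * n + 1) ∣ (d * n + 1).choose n := by
  cases n with
  | zero => simp
  | succ k =>
    have hco : Nat.Coprime (d * (k+1) + 1) (k + 1) := by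
      simpa [Nat.add_comm, Nat.mul_comm] using
        (Nat.coprime_add_mul_left_left 1 (k+1) d).mpr (Nat.coprime_one_left _)
    have hdvd : (d * (k+1) + 1) ∣ (d * (k+1) + 1).choose (k+1) * (k+1) := by
      rw [← Nat.add_one_mul_choose_eq]; exact Dvd.intro _ rfl
    exact hco.dvd_of_dvd_mul_right hdvd

lemma key (m n e A B : ℕ) (hm : m = e * n)
    (hA : (m + n + 1).choose n = (m + n + 1) * A)
    (hB : (m + n + e + 2).choose (n + 1) = (m + n + e + 2) * B) :
    (m + e + 1).choose e * B = (e + 1) * ((m + n + e).choose e) * A := by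
  have G1 := Nat.choose_mul_factorial_mul_factorial (show e ≤ m + e + 1 by omega)
  have G2 := Nat.choose_mul_factorial_mul_factorial (show n + 1 ≤ m + n + e + 2 by omega)
  have G3 := Nat.choose_mul_factorial_mul_factorial (show e ≤ m + n + e by omega)
  have G4 := Nat.choose_mul_factorial_mul_factorial (show n ≤ m + n + 1 by omega)
  rw [show m + e + 1 - e = m + 1 by omega] at G1
  rw [show m + n + e + 2 - (n + 1) = m + e + 1 by omega] at G2
  rw [show m + n + e - e = m + n by omega] at G3
  rw [show m + n + 1 - n = m + 1 by omega] at G4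
  have q1 := congrArg (Nat.cast : ℕ → ℚ) G1
  have q2 := congrArg (Nat.cast : ℕ → ℚ) G2
  have q3 := congrArg (Nat.cast : ℕ → ℚ) G3
  have q4 := congrArg (Nat.cast : ℕ → ℚ) G4
  have qA := congrArg (Nat.cast : ℕ → ℚ) hA
  have qB := congrArg (Nat.cast : ℕ → ℚ) hB
  push_cast at q1 q2 q3 q4 qA qB
  have qgoal : (((m + e + 1).choose e : ℚ)) * B = (e + 1) * ((m + n + e).choose e) * A := by
    have f1 : (e.factorial : ℚ) ≠ 0 := by positivity
    have f2 : ((m+1).factorial : ℚ) ≠ 0 := by positivity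
    have f3 : (n.factorial : ℚ) ≠ 0 := by positivity
    have f4 : ((m+n).factorial : ℚ) ≠ 0 := by positivity
    have f5 : ((m+e+1).factorial : ℚ) ≠ 0 := by positivity
    have h6 : ((m:ℚ)+n+1) ≠ 0 := by positivity
    have h7 : ((m:ℚ)+n+e+2) ≠ 0 := by positivity
    have hA' : (A:ℚ) = ((m+n+1).choose n : ℚ) / (m+n+1) := by
      rw [eq_div_iff h6]; linear_combination -qA
    have hB' : (B:ℚ) = ((m+n+e+2).choose (n+1) : ℚ) / (m+n+e+2) := by
      rw [eq_div_iff h7]; linear_combination -qB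
    have hC1 : (((m+e+1).choose e : ℚ)) = ((m+e+1).factorial : ℚ) / (e.factorial * (m+1).factorial) := by
      rw [eq_div_iff (by positivity)]; linear_combination q1
    have hC2 : (((m+n+e+2).choose (n+1) : ℚ)) = ((m+n+e+2).factorial : ℚ) / ((n+1).factorial * (m+e+1).factorial) := by
      rw [eq_div_iff (by positivity)]; linear_combination q2
    have hC3 : (((m+n+e).choose e : ℚ)) = ((m+n+e).factorial : ℚ) / (e.factorial * (m+n).factorial) := by
      rw [eq_div_iff (by positivity)]; linear_combination q3
    have hC4 : (((m+n+1).choose n : ℚ)) = ((m+n+1).factorial : ℚ) / (n.factorial * (m+1).factorial) := by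
      rw [eq_div_iff (by positivity)]; linear_combination q4
    have E1 : ((m+n+e+2).factorial : ℚ) = (m+n+e+2) * (m+n+e+1) * (m+n+e).factorial := by
      rw [show m+n+e+2 = (m+n+e+1)+1 by ring, Nat.factorial_succ,
        show m+n+e+1 = (m+n+e)+1 by ring, Nat.factorial_succ]
      push_cast; ring
    have E2 : ((m+n+1).factorial : ℚ) = (m+n+1) * (m+n).factorial := by
      rw [show m+n+1 = (m+n)+1 by ring, Nat.factorial_succ]; push_cast; ring
    have E3 : ((n+1).factorial : ℚ) = (n+1) * n.factorial := by
      rw [Nat.factorial_succ]; push_cast; ring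
    rw [hA', hB', hC1, hC2, hC3, hC4, E1, E2, E3]
    subst hm
    push_cast
    field_simp
    ring
  exact_mod_cast qgoal

/-- `a n d = C(dn+1, n) / (dn+1)`, the number of `d`-ary trees with `n` internal nodes. -/
def a (n d : ℕ) : ℕ := (d * n + 1).choose n / (d * n + 1)

/-- The identity `C((d-1)(n+1)+1, d-1) · a(n+1,d) = d · C(dn+d-1, d-1) · a(n,d)`. -/
theorem statement4 (n d : ℕ) (hd : 2 ≤ d) :
    ((d - 1) * (n + 1) + 1).choose (d - 1) * a (n + 1) d =
      d * (d * n + d - 1).choose (d - 1) * a n d := by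
  obtain ⟨e, rfl⟩ : ∃ e, d = e + 1 := ⟨d - 1, by omega⟩
  obtain ⟨A, hA⟩ := dvd_choose_a n (e + 1)
  obtain ⟨B, hB⟩ := dvd_choose_a (n + 1) (e + 1)
  have haA : a n (e + 1) = A := by
    unfold a; rw [hA]; exact Nat.mul_div_cancel_left _ (Nat.succ_pos _)
  have haB : a (n + 1) (e + 1) = B := by
    unfold a; rw [hB]; exact Nat.mul_div_cancel_left _ (Nat.succ_pos _)
  rw [haA, haB, Nat.add_sub_cancel,
    show (e + 1) * n + (e + 1) - 1 = (e + 1) * n + e from by omega,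
    show (e + 1) * n + e = e * n + n + e from by ring,
    show e * (n + 1) + 1 = e * n + e + 1 from by ring]
  exact key (e * n) n e A B rfl
    (by rw [show e * n + n + 1 = (e + 1) * n + 1 from by ring]; exact hA)
    (by rw [show e * n + n + e + 2 = (e + 1) * (n + 1) + 1 from by ring]; exact hB)
end

section
/- For any m ≥ 1 and any Łukasiewicz walk s of length m, if a(s) denotes the first time s attains its minimum over {0,...,m}, then Rot_{a(s)}(s) is an excursion. -/
/-- A Łukasiewicz walk of length `m`: starts at 0, ends at `-1`, increments `≥ -1`. -/
def IsLuka (m : ℕ) (s : ℕ → ℤ) : Prop :=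
  s 0 = 0 ∧ s m = -1 ∧ ∀ j < m, -1 ≤ s (j + 1) - s j

/-- An excursion: a Łukasiewicz walk which is nonnegative at times `0, ..., m-1`. -/
def IsExcursion (m : ℕ) (s : ℕ → ℤ) : Prop :=
  IsLuka m s ∧ ∀ j < m, 0 ≤ s j

/-- The `r`-th rotation of the walk `s` of length `m`: the walk starting at `0` whose
`i`-th increment is the `((i + r) % m)`-th increment of `s`. -/
def rot (m r : ℕ) (s : ℕ → ℤ) : ℕ → ℤ :=
  fun j => ∑ i ∈ Finset.range j, (s ((i + r) % m + 1) - s ((i + r) % m))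

/-- `k` is the first time at which `s` attains its minimum over `{0, ..., m}`. -/
def IsFirstArgmin (m : ℕ) (s : ℕ → ℤ) (k : ℕ) : Prop :=
  k ≤ m ∧ (∀ j ≤ m, s k ≤ s j) ∧ ∀ j < k, s k < s j

/-- If `k` is the first time a Łukasiewicz walk `s` of length `m ≥ 1` attains its minimum
over `{0, ..., m}`, then the `k`-th rotation of `s` is an excursion. -/
theorem statement6 (m : ℕ) (hm : 1 ≤ m) (s : ℕ → ℤ) (hs : IsLuka m s)
    (k : ℕ) (hk : IsFirstArgmin m s k) : IsExcursion m (rot m k s) := by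
  obtain ⟨h0, hmEnd, hinc⟩ := hs
  obtain ⟨hkm, hmin, hfirst⟩ := hk
  have key : ∀ j ≤ m, rot m k s j =
      if j + k ≤ m then s (j + k) - s k else s (j + k - m) - s k - 1 := by
    intro j hj
    induction j with
    | zero => simp [rot, hkm]
    | succ j ih =>
      have hjm : j < m := hj
      have ih' := ih (le_of_lt hjm)
      have hstep : rot m k s (j + 1) =
          rot m k s j + (s ((j + k) % m + 1) - s ((j + k) % m)) := by
        simp [rot, Finset.sum_range_succ]; ring
      rcases lt_trichotomy (j + k) m with hlt | heq | hgt
      · have hmod : (j + k) % m = j + k := Nat.mod_eq_of_lt hlt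
        rw [hstep, ih', if_pos (le_of_lt hlt), if_pos (by omega), hmod]
        have : j + 1 + k = j + k + 1 := by ring
        rw [this]; ring
      · have hmod : (j + k) % m = 0 := by simp [heq]
        rw [hstep, ih', if_pos (le_of_eq heq), if_neg (by omega), hmod, h0, heq, hmEnd]
        have : j + 1 + k - m = 1 := by omega
        rw [this]; ring
      · have hmod : (j + k) % m = j + k - m := by
          rw [Nat.mod_eq_sub_mod (le_of_lt hgt), Nat.mod_eq_of_lt (by omega)]
        rw [hstep, ih', if_neg (by omega), if_neg (by omega), hmod]
        have : j + 1 + k - m = (j + k - m) + 1 := by omega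
        rw [this]; ring
  refine ⟨⟨by simp [rot], ?_, ?_⟩, ?_⟩
  · rw [key m le_rfl]
    rcases Nat.eq_zero_or_pos k with hk0 | hkpos
    · rw [if_pos (by omega)]; subst hk0; simp [hmEnd, h0]
    · rw [if_neg (by omega)]
      have : m + k - m = k := by omega
      rw [this]; ring
  · intro j hj
    have hmod : (j + k) % m < m := Nat.mod_lt _ (by omega)
    have e : rot m k s (j + 1) - rot m k s j
        = s ((j + k) % m + 1) - s ((j + k) % m) := by
      simp [rot, Finset.sum_range_succ]; ring
    rw [e]; exact hinc _ hmod
  · intro j hj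
    rw [key j (le_of_lt hj)]
    rcases le_or_gt (j + k) m with hle | hgt
    · rw [if_pos hle]
      have := hmin (j + k) hle
      omega
    · rw [if_neg (by omega)]
      have h1 : j + k - m < k := by omega
      have := hfirst (j + k - m) h1
      omega
end

section
/- The number of excursion-type leaf-marked forests of d d-ary trees with n internal nodes and d-1 marked leaves in total equals (1/d) times the total number of such leaf-marked forests. -/
/-- Partial sums of a sequence of integers. -/
def psum (b : ℕ → ℤ) (m : ℕ) : ℤ := ∑ i ∈ Finset.range m, b i

lemma psum_add (b : ℕ → ℤ) (k m : ℕ) :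
    psum b (k + m) = psum b k + ∑ i ∈ Finset.range m, b (k + i) := by
  induction m with
  | zero => simp [psum]
  | succ m ih =>
      rw [← Nat.add_assoc, psum, Finset.sum_range_succ, ← psum, ih,
        Finset.sum_range_succ]
      ring

lemma window_sum {d : ℕ} (b : ℕ → ℤ) (hper : ∀ i, b (i + d) = b i) (m : ℕ) :
    ∑ i ∈ Finset.range d, b (m + i) = ∑ i ∈ Finset.range d, b i := by
  induction m with
  | zero => simp
  | succ m ih =>
      have h1 : ∑ i ∈ Finset.range (d + 1), b (m + i)
          = (∑ i ∈ Finset.range d, b (m + (i + 1))) + b (m + 0) :=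
        Finset.sum_range_succ' (fun i => b (m + i)) d
      have h2 : ∑ i ∈ Finset.range (d + 1), b (m + i)
          = (∑ i ∈ Finset.range d, b (m + i)) + b (m + d) :=
        Finset.sum_range_succ (fun i => b (m + i)) d
      have h3 : b (m + d) = b (m + 0) := by simpa using hper m
      have h4 : ∀ i, m + (i + 1) = (m + 1) + i := by omega
      calc ∑ i ∈ Finset.range d, b (m + 1 + i)
          = ∑ i ∈ Finset.range d, b (m + (i + 1)) := by
            refine Finset.sum_congr rfl fun i _ => by congr 1; omega
        _ = ∑ i ∈ Finset.range d, b (m + i) := by linarith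

        _ = ∑ i ∈ Finset.range d, b i := ih

lemma psum_add_period {d : ℕ} (b : ℕ → ℤ) (hper : ∀ i, b (i + d) = b i)
    (hsum : (∑ i ∈ Finset.range d, b i) = -1) (m : ℕ) :
    psum b (m + d) = psum b m - 1 := by
  rw [psum_add, window_sum b hper, hsum]; ring

/-- The cycle lemma: for a `d`-periodic integer sequence whose period sums to `-1`,
there is exactly one starting point `k < d` from which all partial sums within one
period stay at or above the start. -/
lemma cycle_lemma {d : ℕ} (hd : 0 < d) (b : ℕ → ℤ) (hper : ∀ i, b (i + d) = b i)
    (hsum : (∑ i ∈ Finset.range d, b i) = -1) :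
    ∃! k, k < d ∧ ∀ m, m < d → psum b k ≤ psum b (k + m) := by
  have hdrop := psum_add_period b hper hsum
  have hex : ∃ k, k < d ∧ ∀ j, j < d → psum b k ≤ psum b j := by
    obtain ⟨k, hk, hmin⟩ := Finset.exists_min_image (Finset.range d) (psum b)
      ⟨0, Finset.mem_range.2 hd⟩
    exact ⟨k, Finset.mem_range.1 hk, fun j hj => hmin j (Finset.mem_range.2 hj)⟩
  classical
  set k := Nat.find hex with hkdef
  obtain ⟨hkd, hkmin⟩ := Nat.find_spec hex
  have hleast : ∀ j, j < k → psum b k < psum b j := by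
    intro j hj
    have hjd : j < d := lt_trans hj hkd
    by_contra hcon
    push_neg at hcon
    exact Nat.find_min hex hj ⟨hjd, fun j' hj' => le_trans hcon (hkmin j' hj')⟩
  have hsat : k < d ∧ ∀ m, m < d → psum b k ≤ psum b (k + m) := by
    refine ⟨hkd, fun m hm => ?_⟩
    rcases lt_or_ge (k + m) d with h | h
    · exact hkmin _ h
    · have hj : k + m - d < k := by omega
      have : psum b (k + m) = psum b (k + m - d) - 1 := by
        have := hdrop (k + m - d); rw [Nat.sub_add_cancel h] at this; exact this
      rw [this]
      have := hleast _ hj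
      omega
  -- uniqueness helper
  have huniq : ∀ t1 t2, t1 < t2 → t2 < d →
      (∀ m, m < d → psum b t1 ≤ psum b (t1 + m)) →
      (∀ m, m < d → psum b t2 ≤ psum b (t2 + m)) → False := by
    intro t1 t2 h12 h2d H1 H2
    have hA : psum b t1 ≤ psum b t2 := by
      have := H1 (t2 - t1) (by omega)
      rwa [Nat.add_sub_cancel' (le_of_lt h12)] at this
    have hB : psum b t2 ≤ psum b t1 - 1 := by
      have := H2 (t1 + d - t2) (by omega)
      have he : t2 + (t1 + d - t2) = t1 + d := by omega
      rw [he, hdrop t1] at this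
      exact this
    omega
  refine ⟨k, hsat, fun t ht => ?_⟩
  rcases lt_trichotomy t k with h | h | h
  · exact absurd (huniq t k h hkd ht.2 hsat.2) not_false
  · exact h
  · exact absurd (huniq k t h ht.1 hsat.2 ht.2) not_false

section ForestAux

variable {d : ℕ} [NeZero d]

open Fin.NatCast

/-- The step sequence of a forest, extended `d`-periodically to `ℕ`. -/
def bfun (g : Fin d → DaryTree d × Finset (List (Fin d))) (i : ℕ) : ℤ :=
  ((g (i : Fin d)).2.card : ℤ) - 1

/-- Cyclic shift of a forest by `k`. -/
def shiftF (k : Fin d) (g : Fin d → DaryTree d × Finset (List (Fin d))) :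
    Fin d → DaryTree d × Finset (List (Fin d)) := fun i => g (i + k)

lemma shiftF_shiftF (k k' : Fin d) (g : Fin d → DaryTree d × Finset (List (Fin d))) :
    shiftF k (shiftF k' g) = shiftF (k + k') g := by
  funext i; simp [shiftF, add_assoc]

lemma shiftF_zero (g : Fin d → DaryTree d × Finset (List (Fin d))) :
    shiftF 0 g = g := by funext i; simp [shiftF]

lemma bfun_period (g : Fin d → DaryTree d × Finset (List (Fin d))) (i : ℕ) :
    bfun g (i + d) = bfun g i := by
  simp [bfun, Nat.cast_add]

lemma bfun_shift (k : Fin d) (g : Fin d → DaryTree d × Finset (List (Fin d))) (i : ℕ) :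
    bfun (shiftF k g) i = bfun g (k.1 + i) := by
  simp [bfun, shiftF, Nat.cast_add, add_comm]

lemma filter_sum_eq (g : Fin d → DaryTree d × Finset (List (Fin d))) (m : ℕ) (hm : m ≤ d) :
    ∑ j ∈ Finset.univ.filter (fun j : Fin d => j.1 < m), (((g j).2.card : ℤ) - 1)
      = psum (bfun g) m := by
  rw [Finset.sum_filter, psum]
  have h1 : ∑ j : Fin d, (if j.1 < m then (((g j).2.card : ℤ) - 1) else 0)
      = ∑ i ∈ Finset.range d, (if i < m then bfun g i else 0) := by
    rw [← Fin.sum_univ_eq_sum_range (fun i => if i < m then bfun g i else 0) d]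
    refine Finset.sum_congr rfl fun j _ => ?_
    simp [bfun]
  rw [h1, ← Finset.sum_filter]
  congr 1
  ext i
  simp only [Finset.mem_filter, Finset.mem_range]
  omega

lemma sum_bfun_range (g : Fin d → DaryTree d × Finset (List (Fin d)))
    (hc : (∑ i, (g i).2.card) = d - 1) :
    (∑ i ∈ Finset.range d, bfun g i) = -1 := by
  have hd1 : 1 ≤ d := Nat.one_le_iff_ne_zero.2 (NeZero.ne d)
  rw [← Fin.sum_univ_eq_sum_range (fun i => bfun g i) d]
  have : ∑ j : Fin d, bfun g j.1 = ∑ j : Fin d, (((g j).2.card : ℤ) - 1) := by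
    refine Finset.sum_congr rfl fun j _ => by simp [bfun]
  rw [this, Finset.sum_sub_distrib, ← Nat.cast_sum, hc]
  simp only [Finset.sum_const, Finset.card_univ, Fintype.card_fin, nsmul_eq_mul, mul_one]
  push_cast [Nat.cast_sub hd1]
  ring

/-- Translation of the excursion condition for a shifted forest. -/
lemma exc_shift_iff (k : Fin d) (g : Fin d → DaryTree d × Finset (List (Fin d))) :
    (∀ m : ℕ, m < d →
        0 ≤ ∑ j ∈ Finset.univ.filter (fun j : Fin d => j.1 < m),
              (((shiftF k g j).2.card : ℤ) - 1)) ↔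
      (∀ m, m < d → psum (bfun g) k.1 ≤ psum (bfun g) (k.1 + m)) := by
  have key : ∀ m : ℕ, m ≤ d →
      ∑ j ∈ Finset.univ.filter (fun j : Fin d => j.1 < m),
        (((shiftF k g j).2.card : ℤ) - 1)
        = psum (bfun g) (k.1 + m) - psum (bfun g) k.1 := by
    intro m hm
    rw [filter_sum_eq (shiftF k g) m hm, psum_add (bfun g) k.1 m]
    have : psum (bfun (shiftF k g)) m = ∑ i ∈ Finset.range m, bfun g (k.1 + i) := by
      rw [psum]; exact Finset.sum_congr rfl fun i _ => bfun_shift k g i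
    rw [this]; ring
  constructor
  · intro H m hm
    have := H m hm
    rw [key m (le_of_lt hm)] at this
    linarith
  · intro H m hm
    rw [key m (le_of_lt hm)]
    have := H m hm
    linarith

lemma sum_shiftF {M : Type*} [AddCommMonoid M] (k : Fin d)
    (g : Fin d → DaryTree d × Finset (List (Fin d)))
    (F : DaryTree d × Finset (List (Fin d)) → M) :
    ∑ i, F (shiftF k g i) = ∑ i, F (g i) :=
  Fintype.sum_equiv (Equiv.addRight k) _ _ (fun _ => rfl)

end ForestAux

set_option maxHeartbeats 1000000 in
/-- `d` times the number of excursion-type leaf-marked forests (of `d` `d`-ary trees with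
`n` internal nodes and `d-1` marked leaves in total) equals the total number of such
leaf-marked forests. -/
theorem statement11 (n d : ℕ) (hd : 2 ≤ d) :
    d * Nat.card {g : Fin d → DaryTree d × Finset (List (Fin d)) //
        (∑ i, internalCount (g i).1) = n ∧
        (∀ i, ∀ u ∈ (g i).2, isLeaf (g i).1 u) ∧
        (∑ i, (g i).2.card) = d - 1 ∧
        ∀ k : ℕ, k < d →
          0 ≤ ∑ j ∈ Finset.univ.filter (fun j : Fin d => j.1 < k),
                (((g j).2.card : ℤ) - 1)} =
      Nat.card {g : Fin d → DaryTree d × Finset (List (Fin d)) //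
        (∑ i, internalCount (g i).1) = n ∧
        (∀ i, ∀ u ∈ (g i).2, isLeaf (g i).1 u) ∧
        (∑ i, (g i).2.card) = d - 1} := by
  haveI : NeZero d := ⟨by omega⟩
  -- the shift of a forest preserves the three basic counting conditions
  have hshiftP : ∀ (k : Fin d) (g : Fin d → DaryTree d × Finset (List (Fin d))),
      ((∑ i, internalCount (g i).1) = n ∧
        (∀ i, ∀ u ∈ (g i).2, isLeaf (g i).1 u) ∧
        (∑ i, (g i).2.card) = d - 1) →
      ((∑ i, internalCount ((shiftF k g) i).1) = n ∧
        (∀ i, ∀ u ∈ ((shiftF k g) i).2, isLeaf ((shiftF k g) i).1 u) ∧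
        (∑ i, ((shiftF k g) i).2.card) = d - 1) := by
    rintro k g ⟨h1, h2, h3⟩
    refine ⟨?_, ?_, ?_⟩
    · rw [sum_shiftF k g (fun p => internalCount p.1)]; exact h1
    · intro i; exact h2 (i + k)
    · rw [sum_shiftF k g (fun p => p.2.card)]; exact h3
  let φ : Fin d × {g : Fin d → DaryTree d × Finset (List (Fin d)) //
        (∑ i, internalCount (g i).1) = n ∧
        (∀ i, ∀ u ∈ (g i).2, isLeaf (g i).1 u) ∧
        (∑ i, (g i).2.card) = d - 1 ∧
        ∀ k : ℕ, k < d →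
          0 ≤ ∑ j ∈ Finset.univ.filter (fun j : Fin d => j.1 < k),
                (((g j).2.card : ℤ) - 1)} →
      {g : Fin d → DaryTree d × Finset (List (Fin d)) //
        (∑ i, internalCount (g i).1) = n ∧
        (∀ i, ∀ u ∈ (g i).2, isLeaf (g i).1 u) ∧
        (∑ i, (g i).2.card) = d - 1} :=
    fun p => ⟨shiftF p.1 p.2.1, hshiftP p.1 p.2.1 ⟨p.2.2.1, p.2.2.2.1, p.2.2.2.2.1⟩⟩
  have hbij : Function.Bijective φ := by
    constructor
    · rintro ⟨k1, g1, hN1, hL1, hC1, hE1⟩ ⟨k2, g2, hN2, hL2, hC2, hE2⟩ h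
      have heq : shiftF k1 g1 = shiftF k2 g2 := congrArg Subtype.val h
      set h0 := shiftF k1 g1 with hh0
      have hg1 : g1 = shiftF (-k1) h0 := by
        rw [hh0, shiftF_shiftF, neg_add_cancel, shiftF_zero]
      have hg2 : g2 = shiftF (-k2) h0 := by
        rw [heq, shiftF_shiftF, neg_add_cancel, shiftF_zero]
      have hC0 : (∑ i, (h0 i).2.card) = d - 1 :=
        (hshiftP k1 g1 ⟨hN1, hL1, hC1⟩).2.2
      have hsum0 := sum_bfun_range h0 hC0
      have hper0 := bfun_period h0
      obtain ⟨t, -, huniq⟩ := cycle_lemma (by omega : 0 < d) (bfun h0) hper0 hsum0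
      have h1' : (-k1).1 = t := by
        refine huniq _ ⟨(-k1).isLt, ?_⟩
        exact (exc_shift_iff (-k1) h0).1 (by rw [← hg1]; exact hE1)
      have h2' : (-k2).1 = t := by
        refine huniq _ ⟨(-k2).isLt, ?_⟩
        exact (exc_shift_iff (-k2) h0).1 (by rw [← hg2]; exact hE2)
      have hk : k1 = k2 := by
        have : (-k1) = (-k2) := Fin.ext (h1'.trans h2'.symm)
        exact neg_injective this
      have hg : g1 = g2 := by rw [hg1, hg2, hk]
      simp only [Prod.mk.injEq, Subtype.mk.injEq]
      exact ⟨hk, hg⟩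
    · rintro ⟨h0, hN, hL, hC⟩
      have hsum0 := sum_bfun_range h0 hC
      have hper0 := bfun_period h0
      obtain ⟨t, ⟨htd, hprop⟩, -⟩ := cycle_lemma (by omega : 0 < d) (bfun h0) hper0 hsum0
      set k : Fin d := ⟨t, htd⟩ with hkdef
      have hE : ∀ m : ℕ, m < d →
          0 ≤ ∑ j ∈ Finset.univ.filter (fun j : Fin d => j.1 < m),
                ((((shiftF k h0) j).2.card : ℤ) - 1) :=
        (exc_shift_iff k h0).2 hprop
      refine ⟨⟨-k, ⟨shiftF k h0, ?_, ?_, ?_, hE⟩⟩, ?_⟩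
      · exact (hshiftP k h0 ⟨hN, hL, hC⟩).1
      · exact (hshiftP k h0 ⟨hN, hL, hC⟩).2.1
      · exact (hshiftP k h0 ⟨hN, hL, hC⟩).2.2
      · apply Subtype.ext
        show shiftF (-k) (shiftF k h0) = h0
        rw [shiftF_shiftF, neg_add_cancel, shiftF_zero]
  have hcard := Nat.card_eq_of_bijective φ hbij
  rw [Nat.card_prod] at hcard
  simpa using hcard
end

section
/- For d ≥ 2 and n ≥ 0, the number of d-ary trees with n internal nodes carrying d-1 marks on edges-or-buds, times d, equals the number of d-ary trees with n+1 internal nodes carrying d-1 marked leaves: d · C(dn+d-1, d-1) · a(n,d) = C((d-1)(n+1)+1, d-1) · a(n+1,d), and hence there exists a bijection between the set EA(n,d) × {1,...,d} and the set LA(n+1,d,d-1). -/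
/-- Edge-marked trees: a `d`-ary tree with `n` internal nodes together with `d-1` marks
distributed among its edges (identified with their non-root endpoints) and the `d-1` buds. -/
def EAType (n d : ℕ) :=
  {p : DaryTree d × Finset (List (Fin d) ⊕ Fin (d - 1)) //
    (∀ x ∈ p.2, ∀ u : List (Fin d), x = Sum.inl u → u ∈ p.1.words ∧ u ≠ []) ∧
    internalCount p.1 = n ∧ p.2.card = d - 1}

/-- Leaf-marked trees: a `d`-ary tree with `n` internal nodes together with a set
of `m` distinguished leaves. -/
def LAType (n d m : ℕ) :=
  {p : DaryTree d × Finset (List (Fin d)) //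
    internalCount p.1 = n ∧ (∀ u ∈ p.2, isLeaf p.1 u) ∧ p.2.card = m}



/-- forest codes: `codes d r n` = Łukasiewicz-type codes for ordered forests of
`d`-ary trees with `r` roots and `n` internal nodes in total. -/
def codes (d : ℕ) : ℕ → ℕ → Finset (List Bool)
  | 0, 0 => {[]}
  | 0, _+1 => ∅
  | r+1, n =>
    (codes d r n).image (List.cons false) ∪
      (match n with
       | 0 => ∅
       | n+1 => (codes d (r+d) n).image (List.cons true))
  termination_by r n => (n, r)

inductive DTree (d : ℕ) : Type
  | leaf : DTree d
  | node (children : Fin d → DTree d) : DTree d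

def DTree.icount {d : ℕ} : DTree d → ℕ
  | .leaf => 0
  | .node f => 1 + ∑ j, (f j).icount

def DTree.encode {d : ℕ} : DTree d → List Bool
  | .leaf => [false]
  | .node f => true :: ((List.finRange d).flatMap fun j => (f j).encode)

lemma codes_succ (d r n : ℕ) :
    codes d (r+1) n = (codes d r n).image (List.cons false) ∪
      (match n with
       | 0 => (∅ : Finset (List Bool))
       | n+1 => (codes d (r+d) n).image (List.cons true)) := by
  rw [codes.eq_def]

lemma codes_card_succ_succ (d r n : ℕ) :
    (codes d (r+1) (n+1)).card = (codes d r (n+1)).card + (codes d (r+d) n).card := by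
  rw [codes_succ]
  rw [Finset.card_union_of_disjoint]
  · rw [Finset.card_image_of_injective _ (List.cons_injective),
      Finset.card_image_of_injective _ (List.cons_injective)]
  · simp only [Finset.disjoint_left, Finset.mem_image]
    rintro x ⟨u, _, rfl⟩ ⟨v, _, h⟩
    simp at h

lemma codes_card_zero (d : ℕ) : ∀ r, (codes d r 0).card = 1
  | 0 => by rw [codes.eq_def]; rfl
  | r+1 => by
    rw [codes_succ]
    simp only [Finset.union_empty]
    rw [Finset.card_image_of_injective _ (List.cons_injective)]
    exact codes_card_zero d r

lemma choose_key (e N n r : ℕ) (hN : N = (e+1)*n + (e+1) + r) :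
    (N+1) * (r * N.choose (n+1) + (r+(e+1)) * N.choose n) =
      N * ((r+1) * (N+1).choose (n+1)) := by
  have key : N.choose (n+1) * (n+1) = N.choose n * (N - n) := Nat.choose_succ_right_eq N n
  have hN2 : N = e*n + n + e + 1 + r := by rw [hN]; ring
  have hsub : N - n = e*n + e + 1 + r := by omega
  rw [hsub] at key
  have hps : (N+1).choose (n+1) = N.choose n + N.choose (n+1) := Nat.choose_succ_succ N n
  rw [hps]
  have keyZ : ((N.choose (n+1) : ℤ)) * (n+1) = (N.choose n : ℤ) * (e*n + e + 1 + r) := by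
    exact_mod_cast congrArg (Nat.cast : ℕ → ℤ) key
  have hNZ : (N : ℤ) = (e+1)*n + (e+1) + r := by exact_mod_cast congrArg (Nat.cast : ℕ → ℤ) hN
  have : ((N:ℤ)+1) * (r * N.choose (n+1) + (r+(e+1)) * N.choose n) =
      N * ((r+1) * (N.choose n + N.choose (n+1))) := by
    rw [hNZ]
    linear_combination (-(e:ℤ)-1) * keyZ
  exact_mod_cast this

theorem codes_count (d : ℕ) (hd : 1 ≤ d) : ∀ r n,
    (codes d r n).card * (d*n + r) = r * ((d*n + r).choose n)
  | 0, 0 => by simp [codes]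
  | 0, n+1 => by rw [codes.eq_def]; simp
  | r+1, 0 => by simp [codes_card_zero]
  | r+1, n+1 => by
    obtain ⟨e, rfl⟩ : ∃ e, d = e + 1 := ⟨d - 1, by omega⟩
    set N := (e+1)*(n+1) + r with hN
    have A := codes_count (e+1) hd r (n+1)
    have B := codes_count (e+1) hd (r+(e+1)) n
    have hN' : (e+1)*n + (r+(e+1)) = N := by rw [hN]; ring
    rw [hN'] at B
    have hcard := codes_card_succ_succ (e+1) r n
    have hNpos : 0 < N := by positivity
    have goal' : (codes (e+1) (r+1) (n+1)).card * ((e+1)*(n+1) + (r+1)) * N =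
        (r+1) * (((e+1)*(n+1) + (r+1)).choose (n+1)) * N := by
      have h1 : (e+1)*(n+1) + (r+1) = N + 1 := by omega
      rw [h1, hcard]
      calc ((codes (e+1) r (n+1)).card + (codes (e+1) (r+(e+1)) n).card) * (N+1) * N
          = (N+1) * ((codes (e+1) r (n+1)).card * N + (codes (e+1) (r+(e+1)) n).card * N) := by ring
        _ = (N+1) * (r * N.choose (n+1) + (r+(e+1)) * N.choose n) := by rw [A, B]
        _ = N * ((r+1) * (N+1).choose (n+1)) := choose_key e N n r (by rw [hN]; ring)
        _ = (r+1) * ((N+1).choose (n+1)) * N := by ring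
    exact Nat.eq_of_mul_eq_mul_right hNpos goal'
  termination_by r n => (n, r)

def encodeF {d : ℕ} (L : List (DTree d)) : List Bool := L.flatMap DTree.encode

def isum {d : ℕ} (L : List (DTree d)) : ℕ := (L.map DTree.icount).sum

@[simp] lemma encodeF_nil {d : ℕ} : encodeF ([] : List (DTree d)) = [] := rfl
@[simp] lemma encodeF_cons {d : ℕ} (t : DTree d) (L : List (DTree d)) :
    encodeF (t :: L) = t.encode ++ encodeF L := rfl
@[simp] lemma encodeF_append {d : ℕ} (L M : List (DTree d)) :
    encodeF (L ++ M) = encodeF L ++ encodeF M := List.flatMap_append ..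
@[simp] lemma isum_nil {d : ℕ} : isum ([] : List (DTree d)) = 0 := rfl
@[simp] lemma isum_cons {d : ℕ} (t : DTree d) (L : List (DTree d)) :
    isum (t :: L) = t.icount + isum L := rfl
@[simp] lemma isum_append {d : ℕ} (L M : List (DTree d)) :
    isum (L ++ M) = isum L + isum M := by simp [isum]

lemma encode_node {d : ℕ} (f : Fin d → DTree d) :
    (DTree.node f).encode = true :: encodeF (List.ofFn f) := by
  rw [DTree.encode, encodeF, List.ofFn_eq_map, List.flatMap_map]

lemma isum_ofFn {d : ℕ} (f : Fin d → DTree d) :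
    isum (List.ofFn f) = ∑ j, (f j).icount := by
  simp [isum, List.map_ofFn, List.sum_ofFn]

theorem mem_codes {d : ℕ} : ∀ L : List (DTree d), encodeF L ∈ codes d L.length (isum L)
  | [] => by rw [codes.eq_def]; simp
  | .leaf :: L => by
    have h := mem_codes L
    rw [codes.eq_def]
    refine Finset.mem_union_left _ ?_
    have h1 : encodeF (DTree.leaf :: L) = false :: encodeF L := rfl
    rw [h1, show isum (DTree.leaf :: L) = isum L from by simp [DTree.icount]]
    exact Finset.mem_image_of_mem _ h
  | .node f :: L => by
    have h := mem_codes (List.ofFn f ++ L)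
    have hlen : (List.ofFn f ++ L).length = L.length + d := by simp [Nat.add_comm]
    have hsum : (DTree.node f).icount + isum L = isum (List.ofFn f ++ L) + 1 := by
      simp [DTree.icount, isum_ofFn, Nat.add_comm, Nat.add_assoc, Nat.add_left_comm]
    rw [codes.eq_def]
    have h1 : encodeF (DTree.node f :: L) = true :: encodeF (List.ofFn f ++ L) := by
      rw [encodeF_cons, encode_node, List.cons_append, ← encodeF_append]
    rw [h1, show isum (DTree.node f :: L) = (DTree.node f).icount + isum L from rfl, hsum]
    refine Finset.mem_union_right _ ?_
    rw [hlen] at h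
    exact Finset.mem_image_of_mem _ h
  termination_by L => (isum L, L.length)
  decreasing_by
  all_goals simp only [Prod.lex_iff]
  · right
    constructor
    · simp [DTree.icount]
    · simp
  · left
    have : isum (List.ofFn f ++ L) + 1 = isum (DTree.node f :: L) := by
      simp [DTree.icount, isum_ofFn, Nat.add_comm, Nat.add_assoc, Nat.add_left_comm]
    omega

theorem encodeF_inj {d : ℕ} : ∀ L1 L2 : List (DTree d), L1.length = L2.length →
    encodeF L1 = encodeF L2 → L1 = L2
  | [], [], _, _ => rfl
  | [], _ :: _, h, _ => by simp at h
  | _ :: _, [], h, _ => by simp at h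
  | .leaf :: L1, .leaf :: L2, hl, he => by
    have h1 : encodeF (DTree.leaf :: L1) = false :: encodeF L1 := rfl
    have h2 : encodeF (DTree.leaf :: L2) = false :: encodeF L2 := rfl
    rw [h1, h2] at he
    simp only [List.cons.injEq] at he ⊢
    exact ⟨trivial, encodeF_inj L1 L2 (by simpa using hl) he.2⟩
  | .leaf :: L1, .node g :: L2, hl, he => by
    have h1 : encodeF (DTree.leaf :: L1) = false :: encodeF L1 := rfl
    rw [h1, encodeF_cons, encode_node] at he
    simp at he
  | .node f :: L1, .leaf :: L2, hl, he => by
    have h2 : encodeF (DTree.leaf :: L2) = false :: encodeF L2 := rfl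
    rw [h2, encodeF_cons, encode_node] at he
    simp at he
  | .node f :: L1, .node g :: L2, hl, he => by
    rw [encodeF_cons, encodeF_cons, encode_node, encode_node, List.cons_append,
      List.cons_append, ← encodeF_append, ← encodeF_append] at he
    simp only [List.cons.injEq, true_and] at he
    have hlen : (List.ofFn f ++ L1).length = (List.ofFn g ++ L2).length := by
      simpa using hl
    have := encodeF_inj (List.ofFn f ++ L1) (List.ofFn g ++ L2) hlen he
    have hparts := List.append_inj this (by simp)
    obtain ⟨hfg, hL⟩ := hparts
    rw [List.ofFn_inj] at hfg
    rw [hfg, hL]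
  termination_by L1 _ => (isum L1, L1.length)
  decreasing_by
  all_goals
    simp only [Prod.lex_iff, isum_cons, isum_append, isum_ofFn, DTree.icount,
      List.length_cons, List.length_append, List.length_ofFn]
    omega

lemma exists_ofFn_eq {α : Type*} {d : ℕ} (M : List α) (h : M.length = d) :
    ∃ f : Fin d → α, List.ofFn f = M := by
  refine ⟨fun j => M.get (Fin.cast h.symm j), ?_⟩
  rw [← List.ofFn_congr h M.get, List.ofFn_get]

theorem codes_sound {d : ℕ} : ∀ r n w, w ∈ codes d r n →
    ∃ L : List (DTree d), L.length = r ∧ isum L = n ∧ encodeF L = w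
  | 0, 0, w, hw => by
    rw [codes.eq_def] at hw
    simp at hw
    exact ⟨[], rfl, rfl, by simp [hw]⟩
  | 0, n+1, w, hw => by rw [codes.eq_def] at hw; simp at hw
  | r+1, 0, w, hw => by
    rw [codes.eq_def] at hw
    simp only [Finset.union_empty, Finset.mem_image] at hw
    obtain ⟨w', hw', rfl⟩ := hw
    obtain ⟨L, hL, hs, he⟩ := codes_sound r 0 w' hw'
    exact ⟨.leaf :: L, by simp [hL], by simp [DTree.icount, hs], by
      rw [encodeF_cons, he]; rfl⟩
  | r+1, n+1, w, hw => by
    rw [codes.eq_def] at hw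
    simp only [Finset.mem_union, Finset.mem_image] at hw
    rcases hw with ⟨w', hw', rfl⟩ | ⟨w', hw', rfl⟩
    · obtain ⟨L, hL, hs, he⟩ := codes_sound r (n+1) w' hw'
      exact ⟨.leaf :: L, by simp [hL], by simp [DTree.icount, hs], by
        rw [encodeF_cons, he]; rfl⟩
    · obtain ⟨L, hL, hs, he⟩ := codes_sound (r+d) n w' hw'
      have hdle : d ≤ L.length := by omega
      obtain ⟨f, hf⟩ := exists_ofFn_eq (d := d) (L.take d)
        (by rw [List.length_take]; exact Nat.min_eq_left hdle)
      refine ⟨.node f :: L.drop d, by rw [List.length_cons, List.length_drop, hL]; omega, ?_, ?_⟩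
      · have hsp : isum (List.take d L) + isum (List.drop d L) = isum L := by
          rw [← isum_append, List.take_append_drop]
        simp only [isum_cons, DTree.icount, ← isum_ofFn, hf]
        omega
      · rw [encodeF_cons, encode_node, hf, List.cons_append, ← encodeF_append,
          List.take_append_drop, he]
  termination_by r n => (n, r)

def toWords {d : ℕ} : DTree d → Finset (List (Fin d))
  | .leaf => {[]}
  | .node f => insert [] (Finset.univ.biUnion fun j => ((toWords (f j)).image (List.cons j)))

@[simp] lemma mem_toWords_leaf {d : ℕ} (u : List (Fin d)) :
    u ∈ toWords (.leaf : DTree d) ↔ u = [] := by simp [toWords]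

lemma mem_toWords_node {d : ℕ} (f : Fin d → DTree d) (u : List (Fin d)) :
    u ∈ toWords (.node f) ↔ u = [] ∨ ∃ j v, v ∈ toWords (f j) ∧ u = j :: v := by
  simp [toWords, eq_comm, and_comm]

@[simp] lemma nil_mem_toWords {d : ℕ} (t : DTree d) : [] ∈ toWords t := by
  cases t <;> simp [toWords]

@[simp] lemma cons_mem_toWords_node {d : ℕ} (f : Fin d → DTree d) (j : Fin d)
    (v : List (Fin d)) : j :: v ∈ toWords (.node f) ↔ v ∈ toWords (f j) := by
  rw [mem_toWords_node]
  constructor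
  · rintro (h | ⟨k, w, hw, h⟩)
    · simp at h
    · obtain ⟨rfl, rfl⟩ : k = j ∧ w = v := by simpa [eq_comm] using h
      exact hw
  · exact fun h => Or.inr ⟨j, v, h, rfl⟩

lemma toWords_prefix_closed {d : ℕ} : ∀ (t : DTree d) (u v : List (Fin d)),
    u ∈ toWords t → v <+: u → v ∈ toWords t := by
  intro t
  induction t with
  | leaf => intro u v hu hv; simp at hu ⊢; subst hu; simpa using hv
  | node f ih =>
    intro u v hu hv
    rcases v with _ | ⟨j, v'⟩
    · simp
    · obtain ⟨w, rfl⟩ := hv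
      rw [List.cons_append, cons_mem_toWords_node] at hu
      rw [cons_mem_toWords_node]
      exact ih j _ _ hu ⟨w, rfl⟩

lemma toWords_complete {d : ℕ} : ∀ (t : DTree d) (u : List (Fin d)) (j : Fin d),
    u ++ [j] ∈ toWords t → ∀ k, u ++ [k] ∈ toWords t := by
  intro t
  induction t with
  | leaf => intro u j hu; simp at hu
  | node f ih =>
    intro u j hu k
    rcases u with _ | ⟨i, u'⟩
    · simpa using nil_mem_toWords (f k)
    · rw [List.cons_append, cons_mem_toWords_node] at hu ⊢
      exact ih i _ j hu k

def fromDTree {d : ℕ} (t : DTree d) : DaryTree d :=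
  ⟨toWords t, nil_mem_toWords t, toWords_prefix_closed t, toWords_complete t⟩

lemma DaryTree.ext' {d : ℕ} {T₁ T₂ : DaryTree d} (h : T₁.words = T₂.words) : T₁ = T₂ := by
  cases T₁; cases T₂; congr


noncomputable local instance (priority := 10) {α : Type*} (p : α → Prop) : DecidablePred p :=
  Classical.decPred p

/-- The finset of internal nodes. -/
noncomputable def internalFinset {d : ℕ} (T : DaryTree d) : Finset (List (Fin d)) :=
  T.words.filter fun u => ∃ j, u ++ [j] ∈ T.words

lemma mem_internalFinset {d : ℕ} (T : DaryTree d) (u : List (Fin d)) :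
    u ∈ internalFinset T ↔ isInternal T u := by
  simp [internalFinset, isInternal]

lemma internalCount_eq {d : ℕ} (T : DaryTree d) :
    internalCount T = (internalFinset T).card := by
  rw [internalCount]
  rw [Nat.card_congr (Equiv.subtypeEquivRight (fun u => (mem_internalFinset T u).symm))]
  simp [Nat.card_eq_fintype_card]

lemma internalFinset_fromDTree_leaf {d : ℕ} :
    internalFinset (fromDTree (.leaf : DTree d)) = ∅ := by
  ext u
  simp only [mem_internalFinset, isInternal, Finset.notMem_empty, iff_false, not_and]
  intro hu
  simp only [fromDTree, mem_toWords_leaf] at hu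
  subst hu
  simp [fromDTree]

lemma internalFinset_fromDTree_node {d : ℕ} (hd : 0 < d) (f : Fin d → DTree d) :
    internalFinset (fromDTree (.node f)) =
      insert [] (Finset.univ.biUnion fun j =>
        ((internalFinset (fromDTree (f j))).image (List.cons j))) := by
  ext u
  simp only [mem_internalFinset, isInternal, Finset.mem_insert, Finset.mem_biUnion,
    Finset.mem_univ, Finset.mem_image, true_and]
  constructor
  · rintro ⟨hu, j, hj⟩
    rcases u with _ | ⟨i, u'⟩
    · exact Or.inl rfl
    · refine Or.inr ⟨i, u', ?_, rfl⟩
      rw [show (fromDTree (.node f)).words = toWords (.node f) from rfl,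
        cons_mem_toWords_node] at hu
      rw [show (i :: u') ++ [j] = i :: (u' ++ [j]) from rfl,
        show (fromDTree (.node f)).words = toWords (.node f) from rfl,
        cons_mem_toWords_node] at hj
      exact ⟨hu, j, hj⟩
  · rintro (rfl | ⟨j, v, ⟨hv, k, hk⟩, rfl⟩)
    · refine ⟨nil_mem_toWords _, ⟨0, hd⟩, ?_⟩
      show [(⟨0, hd⟩ : Fin d)] ∈ toWords (.node f)
      rw [show [(⟨0, hd⟩ : Fin d)] = (⟨0, hd⟩ : Fin d) :: [] from rfl,
        cons_mem_toWords_node]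
      exact nil_mem_toWords _
    · constructor
      · show j :: v ∈ toWords (.node f)
        rw [cons_mem_toWords_node]; exact hv
      · refine ⟨k, ?_⟩
        show (j :: v) ++ [k] ∈ toWords (.node f)
        rw [show (j :: v) ++ [k] = j :: (v ++ [k]) from rfl, cons_mem_toWords_node]
        exact hk

lemma icount_fromDTree {d : ℕ} (hd : 0 < d) (t : DTree d) :
    internalCount (fromDTree t) = t.icount := by
  induction t with
  | leaf => rw [internalCount_eq, internalFinset_fromDTree_leaf]; rfl
  | node f ih =>
    rw [internalCount_eq, internalFinset_fromDTree_node hd]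
    rw [Finset.card_insert_of_notMem (by simp)]
    rw [Finset.card_biUnion]
    · simp only [Finset.card_image_of_injective _ (List.cons_injective)]
      rw [DTree.icount]
      rw [Nat.add_comm]
      congr 1
      exact Finset.sum_congr rfl fun j _ => by rw [← internalCount_eq, ih j]
    · intro i _ j _ hij
      simp only [Finset.disjoint_left, Finset.mem_image]
      rintro x ⟨u, _, rfl⟩ ⟨v, _, h⟩
      exact hij (by simpa using (List.cons.injEq .. ▸ h.symm).1)

lemma toWords_inj {d : ℕ} (hd : 0 < d) : ∀ t₁ t₂ : DTree d,
    toWords t₁ = toWords t₂ → t₁ = t₂ := by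
  intro t₁
  induction t₁ with
  | leaf =>
    intro t₂ h
    cases t₂ with
    | leaf => rfl
    | node g =>
      exfalso
      have : ((⟨0, hd⟩ : Fin d) :: []) ∈ toWords (.node g) := by
        rw [cons_mem_toWords_node]; exact nil_mem_toWords _
      rw [← h] at this
      simp at this
  | node f ih =>
    intro t₂ h
    cases t₂ with
    | leaf =>
      exfalso
      have : ((⟨0, hd⟩ : Fin d) :: []) ∈ toWords (.node f) := by
        rw [cons_mem_toWords_node]; exact nil_mem_toWords _
      rw [h] at this
      simp at this
    | node g =>
      have hfg : ∀ j, f j = g j := by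
        intro j
        refine ih j _ (Finset.ext fun v => ?_)
        rw [← cons_mem_toWords_node f j v, ← cons_mem_toWords_node g j v, h]
      exact congrArg DTree.node (funext hfg)

/-- The `j`-th child subtree of a `DaryTree` whose root is internal. -/
noncomputable def childWords {d : ℕ} (T : DaryTree d) (j : Fin d) : Finset (List (Fin d)) :=
  (T.words.filter fun u => u.head? = some j).image List.tail

lemma mem_childWords {d : ℕ} (T : DaryTree d) (j : Fin d) (v : List (Fin d)) :
    v ∈ childWords T j ↔ j :: v ∈ T.words := by
  simp only [childWords, Finset.mem_image, Finset.mem_filter]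
  constructor
  · rintro ⟨u, ⟨hu, hh⟩, rfl⟩
    rcases u with _ | ⟨k, u'⟩
    · simp at hh
    · obtain rfl : k = j := by simpa using hh
      exact hu
  · intro h
    exact ⟨j :: v, ⟨h, rfl⟩, rfl⟩

lemma words_decomp {d : ℕ} (T : DaryTree d) :
    T.words = insert [] (Finset.univ.biUnion fun j =>
      ((childWords T j).image (List.cons j))) := by
  ext u
  simp only [Finset.mem_insert, Finset.mem_biUnion, Finset.mem_univ, Finset.mem_image, true_and]
  constructor
  · intro hu
    rcases u with _ | ⟨j, v⟩
    · exact Or.inl rfl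
    · exact Or.inr ⟨j, v, (mem_childWords T j v).2 hu, rfl⟩
  · rintro (rfl | ⟨j, v, hv, rfl⟩)
    · exact T.nil_mem
    · exact (mem_childWords T j v).1 hv

lemma childWords_card_lt {d : ℕ} (T : DaryTree d) (j : Fin d) :
    (childWords T j).card < T.words.card := by
  have h1 : (childWords T j).card = ((childWords T j).image (List.cons j)).card :=
    (Finset.card_image_of_injective _ List.cons_injective).symm
  have h2 : (childWords T j).image (List.cons j) ⊆ T.words.erase [] := by
    intro u hu
    simp only [Finset.mem_image] at hu
    obtain ⟨v, hv, rfl⟩ := hu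
    exact Finset.mem_erase.2 ⟨by simp, (mem_childWords T j v).1 hv⟩
  calc (childWords T j).card = _ := h1
    _ ≤ (T.words.erase []).card := Finset.card_le_card h2
    _ < T.words.card := Finset.card_erase_lt_of_mem T.nil_mem

/-- If the root has a child, each `childWords T j` is a valid `d`-ary tree. -/
noncomputable def childTree {d : ℕ} (T : DaryTree d) (j₀ : Fin d)
    (h : [j₀] ∈ T.words) (j : Fin d) : DaryTree d where
  words := childWords T j
  nil_mem := by
    rw [mem_childWords]
    simpa using T.complete [] j₀ (by simpa using h) j
  prefix_closed := by
    intro u v hu hv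
    rw [mem_childWords] at hu ⊢
    exact T.prefix_closed _ _ hu (by simpa using hv)
  complete := by
    intro u k hu k'
    rw [mem_childWords] at hu ⊢
    have := T.complete (j :: u) k (by simpa using hu) k'
    simpa using this

lemma fromDTree_surj {d : ℕ} (hd : 0 < d) (T : DaryTree d) :
    ∃ t : DTree d, toWords t = T.words := by
  generalize hN : T.words.card = N
  induction N using Nat.strong_induction_on generalizing T with
  | _ N ihN =>
  by_cases hroot : ∃ j₀ : Fin d, [j₀] ∈ T.words
  · obtain ⟨j₀, hj₀⟩ := hroot
    have hchild : ∀ j : Fin d, ∃ t : DTree d, toWords t = (childTree T j₀ hj₀ j).words := by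
      intro j
      exact ihN (childTree T j₀ hj₀ j).words.card
        (hN ▸ childWords_card_lt T j) _ rfl
    choose f hf using hchild
    refine ⟨.node f, ?_⟩
    rw [words_decomp T]
    ext u
    rw [mem_toWords_node]
    simp only [Finset.mem_insert, Finset.mem_biUnion, Finset.mem_univ, Finset.mem_image, true_and]
    constructor
    · rintro (rfl | ⟨j, v, hv, rfl⟩)
      · exact Or.inl rfl
      · rw [hf j] at hv
        exact Or.inr ⟨j, v, hv, rfl⟩
    · rintro (rfl | ⟨j, v, hv, rfl⟩)
      · exact Or.inl rfl
      · have hv' : v ∈ toWords (f j) := by rw [hf j]; exact hv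
        exact Or.inr ⟨j, v, hv', rfl⟩
  · refine ⟨.leaf, ?_⟩
    ext u
    simp only [mem_toWords_leaf]
    constructor
    · rintro rfl; exact T.nil_mem
    · intro hu
      by_contra hne
      rcases u with _ | ⟨j, v⟩
      · exact hne rfl
      · exact hroot ⟨j, T.prefix_closed _ [j] hu ⟨v, rfl⟩⟩

/-- Trees with a given internal node count are equivalent to their `DTree` versions. -/
noncomputable def treesEquivDTree {d : ℕ} (hd : 0 < d) (n : ℕ) :
    {t : DTree d // t.icount = n} ≃ {T : DaryTree d // internalCount T = n} :=
  Equiv.ofBijective (fun t => ⟨fromDTree t.1, by rw [icount_fromDTree hd]; exact t.2⟩)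
    ⟨by
      rintro ⟨t₁, h₁⟩ ⟨t₂, h₂⟩ h
      simp only [Subtype.mk.injEq] at h ⊢
      exact toWords_inj hd _ _ (congrArg DaryTree.words h),
     by
      rintro ⟨T, hT⟩
      obtain ⟨t, ht⟩ := fromDTree_surj hd T
      have hTt : fromDTree t = T := DaryTree.ext' ht
      exact ⟨⟨t, by rw [← icount_fromDTree hd t, hTt]; exact hT⟩, by simp [hTt]⟩⟩

lemma encode_mem_codes {d : ℕ} (t : DTree d) : t.encode ∈ codes d 1 t.icount := by
  have h := mem_codes [t]
  simpa using h

/-- `DTree`s with `n` internal nodes are equivalent to codes. -/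
noncomputable def dtreeEquivCodes (d n : ℕ) :
    {t : DTree d // t.icount = n} ≃ {w // w ∈ codes d 1 n} :=
  Equiv.ofBijective (fun t => ⟨t.1.encode, by have := encode_mem_codes t.1; rwa [t.2] at this⟩)
    ⟨by
      rintro ⟨t₁, h₁⟩ ⟨t₂, h₂⟩ h
      simp only [Subtype.mk.injEq] at h ⊢
      have := encodeF_inj [t₁] [t₂] rfl (by simp [h])
      simpa using this,
     by
      rintro ⟨w, hw⟩
      obtain ⟨L, hL, hs, he⟩ := codes_sound 1 _ w hw
      match L, hL with
      | [t], _ =>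
        refine ⟨⟨t, ?_⟩, ?_⟩
        · simpa using hs.symm ▸ (by simpa using hs)
        · simp only [Subtype.mk.injEq]
          simpa using he⟩

lemma trees_card {d : ℕ} (hd : 0 < d) (n : ℕ) :
    Nat.card {T : DaryTree d // internalCount T = n} = (codes d 1 n).card := by
  rw [Nat.card_congr ((treesEquivDTree hd n).symm.trans (dtreeEquivCodes d n)),
    Nat.card_eq_finsetCard]

lemma trees_card_eq_a {d : ℕ} (hd : 0 < d) (n : ℕ) :
    Nat.card {T : DaryTree d // internalCount T = n} = a n d := by
  rw [trees_card hd n]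
  have h := codes_count d hd 1 n
  rw [one_mul] at h
  rw [a, ← h, Nat.mul_div_cancel _ (Nat.succ_pos _)]

lemma erase_nil_eq {d : ℕ} (T : DaryTree d) :
    T.words.erase [] = (internalFinset T ×ˢ Finset.univ).image
      (fun p : List (Fin d) × Fin d => p.1 ++ [p.2]) := by
  ext u
  simp only [Finset.mem_erase, Finset.mem_image, Finset.mem_product, Finset.mem_univ, and_true]
  constructor
  · rintro ⟨hne, hu⟩
    rcases List.eq_nil_or_concat' u with rfl | ⟨v, j, rfl⟩
    · exact absurd rfl hne
    · refine ⟨(v, j), ?_, rfl⟩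
      rw [mem_internalFinset]
      exact ⟨T.prefix_closed _ _ hu ⟨[j], rfl⟩, j, hu⟩
  · rintro ⟨⟨v, j⟩, hv, rfl⟩
    rw [mem_internalFinset] at hv
    obtain ⟨hvw, k, hk⟩ := hv
    exact ⟨by simp, T.complete v k hk j⟩

lemma words_card {d : ℕ} (T : DaryTree d) :
    T.words.card = d * internalCount T + 1 := by
  have hinj : Function.Injective (fun p : List (Fin d) × Fin d => p.1 ++ [p.2]) := by
    rintro ⟨u, j⟩ ⟨v, k⟩ h
    simp only at h
    have hlen : u.length = v.length := by
      have := congrArg List.length h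
      simpa using this
    obtain ⟨h1, h2⟩ := List.append_inj h hlen
    simp only [List.cons.injEq, and_true] at h2
    simp [h1, h2]
  have h1 : (T.words.erase []).card = internalCount T * d := by
    rw [erase_nil_eq, Finset.card_image_of_injective _ hinj, Finset.card_product,
      internalCount_eq]
    simp
  have h2 := Finset.card_erase_add_one T.nil_mem
  rw [← h2, h1, Nat.mul_comm]

/-- The finset of leaves. -/
noncomputable def leavesFinset {d : ℕ} (T : DaryTree d) : Finset (List (Fin d)) :=
  T.words.filter fun u => ∀ j, u ++ [j] ∉ T.words

lemma mem_leavesFinset {d : ℕ} (T : DaryTree d) (u : List (Fin d)) :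
    u ∈ leavesFinset T ↔ isLeaf T u := by
  simp [leavesFinset, isLeaf]

lemma leavesFinset_card {d : ℕ} (T : DaryTree d) :
    (leavesFinset T).card = (d - 1) * internalCount T + 1 ∨ d = 0 := by
  rcases Nat.eq_zero_or_pos d with h | hd
  · exact Or.inr h
  refine Or.inl ?_
  have hsub : internalFinset T ⊆ T.words := Finset.filter_subset _ _
  have hdecomp : leavesFinset T = T.words \ internalFinset T := by
    ext u
    simp only [mem_leavesFinset, isLeaf, Finset.mem_sdiff, mem_internalFinset, isInternal]
    constructor
    · rintro ⟨hu, h⟩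
      exact ⟨hu, fun hc => (h (Classical.choose hc.2)) (Classical.choose_spec hc.2)⟩
    · rintro ⟨hu, h⟩
      exact ⟨hu, fun j hj => h ⟨hu, j, hj⟩⟩
  rw [hdecomp, Finset.card_sdiff_of_subset hsub, words_card, ← internalCount_eq]
  obtain ⟨e, rfl⟩ : ∃ e, d = e + 1 := ⟨d - 1, by omega⟩
  have h3 : (e + 1) * internalCount T = e * internalCount T + internalCount T := by ring
  simp only [Nat.add_sub_cancel]
  omega

/-- The finset of allowed marks: edges (non-root words) and buds. -/
noncomputable def allowedF {d : ℕ} (T : DaryTree d) : Finset (List (Fin d) ⊕ Fin (d - 1)) :=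
  ((T.words.erase []).image Sum.inl) ∪ (Finset.univ.image Sum.inr)

lemma allowedF_card {d : ℕ} (T : DaryTree d) :
    (allowedF T).card = d * internalCount T + (d - 1) := by
  rw [allowedF, Finset.card_union_of_disjoint]
  · rw [Finset.card_image_of_injective _ Sum.inl_injective,
      Finset.card_image_of_injective _ Sum.inr_injective]
    have h2 := Finset.card_erase_add_one T.nil_mem
    have h3 := words_card T
    simp only [Finset.card_univ, Fintype.card_fin]
    omega
  · simp only [Finset.disjoint_left, Finset.mem_image]
    rintro x ⟨u, _, rfl⟩ ⟨v, _, h⟩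
    simp at h

lemma ea_cond_iff {d n : ℕ} (p : DaryTree d × Finset (List (Fin d) ⊕ Fin (d - 1))) :
    ((∀ x ∈ p.2, ∀ u : List (Fin d), x = Sum.inl u → u ∈ p.1.words ∧ u ≠ []) ∧
      internalCount p.1 = n ∧ p.2.card = d - 1) ↔
    (internalCount p.1 = n ∧ p.2 ∈ (allowedF p.1).powersetCard (d - 1)) := by
  rw [Finset.mem_powersetCard]
  constructor
  · rintro ⟨h1, h2, h3⟩
    refine ⟨h2, fun x hx => ?_, h3⟩
    rcases x with u | b
    · obtain ⟨hu, hne⟩ := h1 _ hx u rfl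
      exact Finset.mem_union_left _
        (Finset.mem_image_of_mem _ (Finset.mem_erase.2 ⟨hne, hu⟩))
    · exact Finset.mem_union_right _ (Finset.mem_image_of_mem _ (Finset.mem_univ b))
  · rintro ⟨h2, hsub, h3⟩
    refine ⟨fun x hx u hxu => ?_, h2, h3⟩
    subst hxu
    have := hsub hx
    simp only [allowedF, Finset.mem_union, Finset.mem_image] at this
    rcases this with ⟨v, hv, hveq⟩ | ⟨b, _, hbeq⟩
    · obtain rfl : v = u := Sum.inl_injective hveq
      rw [Finset.mem_erase] at hv
      exact ⟨hv.2, hv.1⟩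
    · simp at hbeq

lemma la_cond_iff {d n m : ℕ} (p : DaryTree d × Finset (List (Fin d))) :
    (internalCount p.1 = n ∧ (∀ u ∈ p.2, isLeaf p.1 u) ∧ p.2.card = m) ↔
    (internalCount p.1 = n ∧ p.2 ∈ (leavesFinset p.1).powersetCard m) := by
  rw [Finset.mem_powersetCard]
  constructor
  · rintro ⟨h1, h2, h3⟩
    exact ⟨h1, fun u hu => (mem_leavesFinset _ _).2 (h2 u hu), h3⟩
  · rintro ⟨h1, hsub, h3⟩
    exact ⟨h1, fun u hu => (mem_leavesFinset _ _).1 (hsub hu), h3⟩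

noncomputable def eaEquivSigma (n d : ℕ) :
    EAType n d ≃ Σ T : {T : DaryTree d // internalCount T = n},
      {M // M ∈ (allowedF T.1).powersetCard (d - 1)} where
  toFun p := ⟨⟨p.1.1, ((ea_cond_iff p.1).1 p.2).1⟩, ⟨p.1.2, ((ea_cond_iff p.1).1 p.2).2⟩⟩
  invFun q := ⟨(q.1.1, q.2.1), (ea_cond_iff (q.1.1, q.2.1)).2 ⟨q.1.2, q.2.2⟩⟩
  left_inv p := rfl
  right_inv q := rfl

noncomputable def laEquivSigma (n d m : ℕ) :
    LAType n d m ≃ Σ T : {T : DaryTree d // internalCount T = n},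
      {M // M ∈ (leavesFinset T.1).powersetCard m} where
  toFun p := ⟨⟨p.1.1, ((la_cond_iff p.1).1 p.2).1⟩, ⟨p.1.2, ((la_cond_iff p.1).1 p.2).2⟩⟩
  invFun q := ⟨(q.1.1, q.2.1), (la_cond_iff (q.1.1, q.2.1)).2 ⟨q.1.2, q.2.2⟩⟩
  left_inv p := rfl
  right_inv q := rfl

lemma choose_identity (m n : ℕ) :
    (m+1) * (((m+1)*n+m).choose m) * (((m+1)*n+1).choose n) * ((m+1)*n+m+2) =
      ((m*(n+1)+1).choose m) * (((m+1)*(n+1)+1).choose (n+1)) * ((m+1)*n+1) := by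
  have hmn : (m+1)*n = m*n+n := by ring
  have hmn2 : m*(n+1) = m*n+m := by ring
  have e1 : (m+1)*n+m - m = (m+1)*n := by omega
  have e2 : (m+1)*n+1 - n = m*n+1 := by omega
  have e3 : m*(n+1)+1 - m = m*n+1 := by omega
  have e4 : (m+1)*(n+1)+1 = (m+1)*n+m+2 := by ring
  have e5 : (m+1)*n+m+2 - (n+1) = m*n+m+1 := by omega
  have q : ((m+1) * (((m+1)*n+m).choose m) * (((m+1)*n+1).choose n) * ((m+1)*n+m+2) : ℚ) =
      (((m*(n+1)+1).choose m) * ((((m+1)*(n+1)+1)).choose (n+1)) * ((m+1)*n+1) : ℚ) := by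
    rw [e4]
    rw [Nat.cast_choose ℚ (by omega : m ≤ (m+1)*n+m),
      Nat.cast_choose ℚ (by omega : n ≤ (m+1)*n+1),
      Nat.cast_choose ℚ (by omega : m ≤ m*(n+1)+1),
      Nat.cast_choose ℚ (by omega : n+1 ≤ (m+1)*n+m+2)]
    rw [e1, e2, e3, e5]
    have f1 : Nat.factorial ((m+1)*n+1) = ((m+1)*n+1) * Nat.factorial ((m+1)*n) :=
      Nat.factorial_succ _
    have f2 : Nat.factorial ((m+1)*n+m+2) = ((m+1)*n+m+2) * Nat.factorial ((m+1)*n+m+1) :=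
      Nat.factorial_succ _
    have f3 : Nat.factorial ((m+1)*n+m+1) = ((m+1)*n+m+1) * Nat.factorial ((m+1)*n+m) :=
      Nat.factorial_succ _
    have f4 : Nat.factorial (n+1) = (n+1) * Nat.factorial n := Nat.factorial_succ _
    have f5 : Nat.factorial (m*(n+1)+1) = (m*(n+1)+1) * Nat.factorial (m*(n+1)) :=
      Nat.factorial_succ _
    have f6 : Nat.factorial (m*n+m+1) = (m*n+m+1) * Nat.factorial (m*n+m) :=
      Nat.factorial_succ _
    rw [f1, f2, f3, f4, f5, f6, hmn2]
    push_cast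
    have nz : ∀ k : ℕ, ((Nat.factorial k : ℚ)) ≠ 0 :=
      fun k => Nat.cast_ne_zero.2 (Nat.factorial_ne_zero k)
    field_simp [nz]
    ring
  exact_mod_cast q

lemma a_eq_card {d : ℕ} (hd : 0 < d) (n : ℕ) : a n d = (codes d 1 n).card :=
  (trees_card_eq_a hd n).symm.trans (trees_card hd n)

lemma a_mul {d : ℕ} (hd : 0 < d) (n : ℕ) : a n d * (d*n+1) = (d*n+1).choose n := by
  rw [a_eq_card hd]
  simpa using codes_count d hd 1 n

lemma main_arith (n d : ℕ) (hd : 2 ≤ d) :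
    d * (d * n + d - 1).choose (d - 1) * a n d =
      ((d - 1) * (n + 1) + 1).choose (d - 1) * a (n + 1) d := by
  obtain ⟨m, rfl⟩ : ∃ m, d = m + 1 := ⟨d - 1, by omega⟩
  have hd1 : 0 < m + 1 := Nat.succ_pos m
  have h1 := a_mul hd1 n
  have h2 := a_mul hd1 (n+1)
  have key := choose_identity m n
  simp only [Nat.add_sub_cancel]
  rw [show (m+1) * n + (m+1) - 1 = (m+1)*n + m from by omega]
  apply Nat.eq_of_mul_eq_mul_right (Nat.succ_pos ((m+1)*n))
  apply Nat.eq_of_mul_eq_mul_right (Nat.succ_pos ((m+1)*(n+1)))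
  calc (m+1) * ((m+1)*n+m).choose m * a n (m+1) * ((m+1)*n+1) * ((m+1)*(n+1)+1)
      = (m+1) * ((m+1)*n+m).choose m * (a n (m+1) * ((m+1)*n+1)) * ((m+1)*(n+1)+1) := by
        ring
    _ = (m+1) * ((m+1)*n+m).choose m * (((m+1)*n+1).choose n) * ((m+1)*(n+1)+1) := by
        rw [h1]
    _ = (m+1) * ((m+1)*n+m).choose m * (((m+1)*n+1).choose n) * ((m+1)*n+m+2) := by
        rw [show (m+1)*(n+1)+1 = (m+1)*n+m+2 from by ring]
    _ = ((m*(n+1)+1).choose m) * (((m+1)*(n+1)+1).choose (n+1)) * ((m+1)*n+1) := key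
    _ = ((m*(n+1)+1).choose m) * (a (n+1) (m+1) * ((m+1)*(n+1)+1)) * ((m+1)*n+1) := by
        rw [h2]
    _ = (m*(n+1)+1).choose m * a (n+1) (m+1) * ((m+1)*n+1) * ((m+1)*(n+1)+1) := by
        ring

lemma leavesFinset_card' {d : ℕ} (hd : 0 < d) (T : DaryTree d) :
    (leavesFinset T).card = (d - 1) * internalCount T + 1 :=
  (leavesFinset_card T).resolve_right (by omega)

noncomputable def eaEquivProd (n d : ℕ) :
    EAType n d ≃ {T : DaryTree d // internalCount T = n} ×
      Fin ((d * n + (d - 1)).choose (d - 1)) :=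
  (eaEquivSigma n d).trans <|
    (Equiv.sigmaCongrRight fun T =>
      Fintype.equivFinOfCardEq (by
        rw [Fintype.card_coe, Finset.card_powersetCard, allowedF_card, T.2])).trans
      (Equiv.sigmaEquivProd _ _)

noncomputable def laEquivProd (n d m : ℕ) (hd : 0 < d) :
    LAType n d m ≃ {T : DaryTree d // internalCount T = n} ×
      Fin (((d - 1) * n + 1).choose m) :=
  (laEquivSigma n d m).trans <|
    (Equiv.sigmaCongrRight fun T =>
      Fintype.equivFinOfCardEq (by
        rw [Fintype.card_coe, Finset.card_powersetCard, leavesFinset_card' hd, T.2])).trans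
      (Equiv.sigmaEquivProd _ _)

theorem statement13' (n d : ℕ) (hd : 2 ≤ d) :
    d * (d * n + d - 1).choose (d - 1) * a n d =
      ((d - 1) * (n + 1) + 1).choose (d - 1) * a (n + 1) d ∧
    Nonempty ((EAType n d × Fin d) ≃ LAType (n + 1) d (d - 1)) := by
  have hd1 : 0 < d := by omega
  refine ⟨main_arith n d hd, ⟨?_⟩⟩
  have eT1 : {T : DaryTree d // internalCount T = n} ≃ {w // w ∈ codes d 1 n} :=
    (treesEquivDTree hd1 n).symm.trans (dtreeEquivCodes d n)
  have eT2 : {T : DaryTree d // internalCount T = n + 1} ≃ {w // w ∈ codes d 1 (n + 1)} :=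
    (treesEquivDTree hd1 (n + 1)).symm.trans (dtreeEquivCodes d (n + 1))
  have eEA : EAType n d ≃ {w // w ∈ codes d 1 n} × Fin ((d * n + (d - 1)).choose (d - 1)) :=
    (eaEquivProd n d).trans (Equiv.prodCongr eT1 (Equiv.refl _))
  have eLA : LAType (n + 1) d (d - 1) ≃
      {w // w ∈ codes d 1 (n + 1)} × Fin (((d - 1) * (n + 1) + 1).choose (d - 1)) :=
    (laEquivProd (n + 1) d (d - 1) hd1).trans (Equiv.prodCongr eT2 (Equiv.refl _))
  refine ((Equiv.prodCongr eEA (Equiv.refl (Fin d))).trans ?_).trans eLA.symm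
  apply Fintype.equivOfCardEq
  simp only [Fintype.card_prod, Fintype.card_coe, Fintype.card_fin]
  have g1 : (codes d 1 n).card = a n d := (a_eq_card hd1 n).symm
  have g2 : (codes d 1 (n + 1)).card = a (n + 1) d := (a_eq_card hd1 (n + 1)).symm
  rw [g1, g2, show d * n + (d - 1) = d * n + d - 1 from by omega]
  have hm := main_arith n d hd
  calc a n d * (d * n + d - 1).choose (d - 1) * d
      = d * (d * n + d - 1).choose (d - 1) * a n d := by ring
    _ = ((d - 1) * (n + 1) + 1).choose (d - 1) * a (n + 1) d := hm
    _ = a (n + 1) d * ((d - 1) * (n + 1) + 1).choose (d - 1) := by ring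

/-- `d · C(dn+d-1, d-1) · a(n,d) = C((d-1)(n+1)+1, d-1) · a(n+1,d)`, and there is a
bijection between `EA(n,d) × {1,...,d}` and `LA(n+1,d,d-1)`. -/
theorem statement13 (n d : ℕ) (hd : 2 ≤ d) :
    d * (d * n + d - 1).choose (d - 1) * a n d =
      ((d - 1) * (n + 1) + 1).choose (d - 1) * a (n + 1) d ∧
    Nonempty ((EAType n d × Fin d) ≃ LAType (n + 1) d (d - 1)) :=
  statement13' n d hd
end

section
/- For m ≥ 1, the number of Łukasiewicz walks of length m equals m times the number of excursions of length m, provided increments are restricted to a fixed finite set S ⊆ {-1,0,1,2,...}: |Seq_m^S| = m · |Excursions_m^S|, where Seq_m^S are walks with increments in S from 0 to -1 in m steps, and Excursions_m^S those additionally nonnegative before time m. -/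
namespace St18

variable {m : ℕ}

/-- Periodic extension of `f : Fin m → ℤ` to `ℕ`. -/
def F (hm : 0 < m) (f : Fin m → ℤ) (i : ℕ) : ℤ := f ⟨i % m, Nat.mod_lt i hm⟩

/-- Partial sums of the periodic extension. -/
def T (hm : 0 < m) (f : Fin m → ℤ) (n : ℕ) : ℤ := ∑ i ∈ Finset.range n, F hm f i

/-- Cyclic rotation of increments by `k`. -/
def rot (hm : 0 < m) (k : ℕ) (f : Fin m → ℤ) : Fin m → ℤ := fun i => F hm f (i.1 + k)

lemma F_eq_of_mod (hm : 0 < m) (f : Fin m → ℤ) {i i' : ℕ} (h : i % m = i' % m) :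
    F hm f i = F hm f i' := by simp only [F, h]

lemma F_of_lt (hm : 0 < m) (f : Fin m → ℤ) {i : ℕ} (h : i < m) :
    F hm f i = f ⟨i, h⟩ := by simp only [F, Nat.mod_eq_of_lt h]

lemma T_succ (hm : 0 < m) (f : Fin m → ℤ) (n : ℕ) :
    T hm f (n + 1) = T hm f n + F hm f n := Finset.sum_range_succ _ _

lemma T_add (hm : 0 < m) (f : Fin m → ℤ) (n : ℕ) :
    T hm f (n + m) = T hm f n + T hm f m := by
  induction n with
  | zero => simp [T]
  | succ n ih =>
    rw [show n + 1 + m = (n + m) + 1 by omega, T_succ, ih, T_succ,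
      F_eq_of_mod hm f (Nat.add_mod_right n m)]
    ring

lemma T_rot (hm : 0 < m) (f : Fin m → ℤ) (k j : ℕ) :
    T hm (rot hm k f) j = T hm f (k + j) - T hm f k := by
  induction j with
  | zero => simp [T]
  | succ j ih =>
    have h1 : F hm (rot hm k f) j = F hm f (k + j) := by
      show F hm f (j % m + k) = F hm f (k + j)
      refine F_eq_of_mod hm f ?_
      rw [Nat.mod_add_mod, Nat.add_comm j k]
    rw [T_succ, ih, h1, show k + (j + 1) = (k + j) + 1 by omega, T_succ]
    ring

lemma rot_rot (hm : 0 < m) (k k' : ℕ) (f : Fin m → ℤ) :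
    rot hm k (rot hm k' f) = rot hm (k' + k) f := by
  funext i
  show F hm f ((i.1 + k) % m + k') = F hm f (i.1 + (k' + k))
  refine F_eq_of_mod hm f ?_
  rw [Nat.mod_add_mod]
  congr 1
  omega

lemma rot_mod (hm : 0 < m) (k : ℕ) (f : Fin m → ℤ) :
    rot hm k f = rot hm (k % m) f := by
  funext i
  refine F_eq_of_mod hm f ?_
  conv_lhs => rw [Nat.add_mod]
  conv_rhs => rw [Nat.add_mod, Nat.mod_mod_of_dvd k dvd_rfl]

lemma rot_zero (hm : 0 < m) (f : Fin m → ℤ) : rot hm 0 f = f := by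
  funext i
  show F hm f (i.1 + 0) = f i
  rw [Nat.add_zero, F_of_lt hm f i.2]

lemma rot_m (hm : 0 < m) (f : Fin m → ℤ) : rot hm m f = f := by
  funext i
  show F hm f (i.1 + m) = f i
  rw [F_eq_of_mod hm f (Nat.add_mod_right i.1 m), F_of_lt hm f i.2]

lemma sum_univ_eq (hm : 0 < m) (f : Fin m → ℤ) : (∑ i, f i) = T hm f m := by
  rw [T, ← Fin.sum_univ_eq_sum_range (fun i => F hm f i) m]
  refine Finset.sum_congr rfl fun i _ => ?_
  rw [F_of_lt hm f i.2]

lemma filter_sum (hm : 0 < m) (f : Fin m → ℤ) {j : ℕ} (hj : j ≤ m) :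
    (∑ i ∈ Finset.univ.filter (fun i : Fin m => i.1 < j), f i) = T hm f j := by
  induction j with
  | zero => simp [T]
  | succ j ih =>
    have hjm : j < m := hj
    have hset : Finset.univ.filter (fun i : Fin m => i.1 < j + 1) =
        insert ⟨j, hjm⟩ (Finset.univ.filter (fun i : Fin m => i.1 < j)) := by
      ext i
      simp only [Finset.mem_filter, Finset.mem_univ, true_and, Finset.mem_insert, Fin.ext_iff]
      omega
    rw [hset, Finset.sum_insert (by simp), ih (by omega), T_succ, F_of_lt hm f hjm]
    ring

/-- `rot hm k f` is an excursion iff `k` satisfies this condition. -/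
def Good (hm : 0 < m) (f : Fin m → ℤ) (k : ℕ) : Prop :=
  ∀ j < m, T hm f k ≤ T hm f (k + j)

lemma good_aux (hm : 0 < m) (f : Fin m → ℤ) (hsum : T hm f m = -1) {k k' : ℕ}
    (hkk' : k < k') (hk' : k' < m) (h : Good hm f k) (h' : Good hm f k') : False := by
  have h1 : T hm f k ≤ T hm f k' := by
    have := h (k' - k) (by omega)
    rwa [show k + (k' - k) = k' by omega] at this
  have h2 : T hm f k' ≤ T hm f (k + m) := by
    have := h' (k + m - k') (by omega)
    rwa [show k' + (k + m - k') = k + m by omega] at this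
  rw [T_add hm f k, hsum] at h2
  linarith

lemma good_unique (hm : 0 < m) (f : Fin m → ℤ) (hsum : T hm f m = -1) {k k' : ℕ}
    (hk : k < m) (hk' : k' < m) (h : Good hm f k) (h' : Good hm f k') : k = k' := by
  rcases lt_trichotomy k k' with hlt | heq | hgt
  · exact (good_aux hm f hsum hlt hk' h h').elim
  · exact heq
  · exact (good_aux hm f hsum hgt hk h' h).elim

lemma exists_good (hm : 0 < m) (f : Fin m → ℤ) (hsum : T hm f m = -1) :
    ∃ k < m, Good hm f k := by
  classical
  have hex : ∃ k, k < m ∧ ∀ l < m, T hm f k ≤ T hm f l := by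
    obtain ⟨k, hk, hmin⟩ := Finset.exists_min_image (Finset.range m) (T hm f)
      ⟨0, Finset.mem_range.2 hm⟩
    exact ⟨k, Finset.mem_range.1 hk, fun l hl => hmin l (Finset.mem_range.2 hl)⟩
  obtain ⟨k₀, hspec, hmin⟩ :
      ∃ k, (k < m ∧ ∀ l < m, T hm f k ≤ T hm f l) ∧
        ∀ l < k, ¬(l < m ∧ ∀ l' < m, T hm f l ≤ T hm f l') :=
    ⟨Nat.find hex, Nat.find_spec hex, fun l hl => Nat.find_min hex hl⟩
  obtain ⟨hk₀m, hk₀min⟩ := hspec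
  refine ⟨k₀, hk₀m, ?_⟩
  intro j hj
  by_cases hcase : k₀ + j < m
  · exact hk₀min _ hcase
  · have hl : k₀ + j - m < k₀ := by omega
    have hnot := hmin _ hl
    push_neg at hnot
    obtain ⟨l', hl', hlt⟩ := hnot (by clear hmin hex; omega)
    have hmin' : T hm f k₀ ≤ T hm f l' := hk₀min _ hl'
    have heq1 : k₀ + j - m + m = k₀ + j := by clear hnot hmin hex; omega
    have hT : T hm f (k₀ + j) = T hm f (k₀ + j - m) + T hm f m := by
      rw [← T_add hm f (k₀ + j - m), heq1]
    rw [hT, hsum]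
    have : T hm f l' + 1 ≤ T hm f (k₀ + j - m) := Int.lt_iff_add_one_le.1 hlt
    linarith

lemma rot_sum (hm : 0 < m) (f : Fin m → ℤ) (hsum : (∑ i, f i) = -1) (k : ℕ) :
    (∑ i, rot hm k f i) = -1 := by
  rw [sum_univ_eq hm, T_rot, T_add hm f k, ← sum_univ_eq hm, hsum]
  ring

end St18

open St18 in
/-- For a fixed finite set `S` of increments with `min S ≥ -1` and `-1 ∈ S`, the number of
Łukasiewicz-type walks of length `m` from `0` to `-1` with increments in `S` equals `m`
times the number of such walks that are nonnegative before time `m` (excursions). Walks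
are encoded by their increment sequences `f : Fin m → ℤ`. -/
theorem statement18 (m : ℕ) (hm : 1 ≤ m) (S : Finset ℤ)
    (hS : ∀ x ∈ S, -1 ≤ x) (hS1 : (-1 : ℤ) ∈ S) :
    Nat.card {f : Fin m → ℤ // (∀ i, f i ∈ S) ∧ (∑ i, f i) = -1} =
      m * Nat.card {f : Fin m → ℤ // (∀ i, f i ∈ S) ∧ (∑ i, f i) = -1 ∧
        ∀ j < m, 0 ≤ ∑ i ∈ Finset.univ.filter (fun i : Fin m => i.1 < j), f i} := by
  classical
  have hm0 : 0 < m := hm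
  set Φ : Fin m × {f : Fin m → ℤ // (∀ i, f i ∈ S) ∧ (∑ i, f i) = -1 ∧
        ∀ j < m, 0 ≤ ∑ i ∈ Finset.univ.filter (fun i : Fin m => i.1 < j), f i} →
      {f : Fin m → ℤ // (∀ i, f i ∈ S) ∧ (∑ i, f i) = -1} :=
    fun p => ⟨rot hm0 p.1.1 p.2.1,
      fun i => p.2.2.1 _,
      rot_sum hm0 p.2.1 p.2.2.2.1 p.1.1⟩ with hΦ
  have hbij : Function.Bijective Φ := by
    constructor
    · -- injectivity
      rintro ⟨j, g, hgS, hgsum, hgexc⟩ ⟨j', g', hgS', hgsum', hgexc'⟩ heq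
      simp only [hΦ, Subtype.mk.injEq] at heq
      have hTg : T hm0 g m = -1 := by rw [← sum_univ_eq hm0]; exact hgsum
      have hTg' : T hm0 g' m = -1 := by rw [← sum_univ_eq hm0]; exact hgsum'
      have hEg : ∀ l < m, 0 ≤ T hm0 g l := fun l hl => by
        rw [← filter_sum hm0 g (le_of_lt hl)]; exact hgexc l hl
      have hEg' : ∀ l < m, 0 ≤ T hm0 g' l := fun l hl => by
        rw [← filter_sum hm0 g' (le_of_lt hl)]; exact hgexc' l hl
      -- auxiliary: the strict-inequality case is impossible
      have key : ∀ (a b : Fin m) (u v : Fin m → ℤ), T hm0 u m = -1 →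
          (∀ l < m, 0 ≤ T hm0 u l) → (∀ l < m, 0 ≤ T hm0 v l) →
          rot hm0 a.1 u = rot hm0 b.1 v → a.1 < b.1 → False := by
        intro a b u v hTu hEu hEv hr hab
        have hbm : b.1 < m := b.2
        have h1 : rot hm0 (m - b.1) (rot hm0 b.1 v) = v := by
          rw [rot_rot, show b.1 + (m - b.1) = m by omega, rot_m]
        have h2 : v = rot hm0 (a.1 + (m - b.1)) u := by
          rw [← h1, ← hr, rot_rot]
        set d := a.1 + (m - b.1) with hd
        have hd1 : 1 ≤ d := by omega
        have hdm : d < m := by omega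
        have hGd : Good hm0 u d := by
          intro l hl
          have := hEv l hl
          rw [h2, T_rot] at this
          linarith
        have hG0 : Good hm0 u 0 := by
          intro l hl
          have h0 : T hm0 u 0 = 0 := by simp [T]
          rw [h0, Nat.zero_add]
          exact hEu l hl
        have := good_unique hm0 u hTu hm0 hdm hG0 hGd
        omega
      rcases lt_trichotomy j.1 j'.1 with hlt | heqj | hgt
      · exact (key j j' g g' hTg hEg hEg' heq hlt).elim
      · have hjj' : j = j' := Fin.ext heqj
        subst hjj'
        have hgg' : g = g' := by
          have h1 : rot hm0 (m - j.1) (rot hm0 j.1 g) = g := by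
            rw [rot_rot, show j.1 + (m - j.1) = m by omega, rot_m]
          have h2 : rot hm0 (m - j.1) (rot hm0 j.1 g') = g' := by
            rw [rot_rot, show j.1 + (m - j.1) = m by omega, rot_m]
          rw [← h1, heq, h2]
        subst hgg'
        rfl
      · exact (key j' j g' g hTg' hEg' hEg heq.symm hgt).elim
    · -- surjectivity
      rintro ⟨f, hfS, hfsum⟩
      have hTf : T hm0 f m = -1 := by rw [← sum_univ_eq hm0]; exact hfsum
      obtain ⟨k₀, hk₀, hgood⟩ := exists_good hm0 f hTf
      set g := rot hm0 k₀ f with hg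
      have hgS : ∀ i, g i ∈ S := fun i => hfS _
      have hgsum : (∑ i, g i) = -1 := rot_sum hm0 f hfsum k₀
      have hgexc : ∀ j < m, 0 ≤ ∑ i ∈ Finset.univ.filter (fun i : Fin m => i.1 < j), g i := by
        intro j hj
        rw [filter_sum hm0 g (le_of_lt hj), hg, T_rot]
        have := hgood j hj
        linarith
      set e := (m - k₀) % m with he
      have hem : e < m := Nat.mod_lt _ hm0
      refine ⟨⟨⟨e, hem⟩, ⟨g, hgS, hgsum, hgexc⟩⟩, ?_⟩
      simp only [hΦ, Subtype.mk.injEq]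
      show rot hm0 e g = f
      rw [hg, rot_rot, rot_mod]
      have hmod : (k₀ + e) % m = 0 := by
        rw [he, Nat.add_mod_mod, show k₀ + (m - k₀) = m by omega, Nat.mod_self]
      rw [hmod, rot_zero]
  calc Nat.card {f : Fin m → ℤ // (∀ i, f i ∈ S) ∧ (∑ i, f i) = -1}
      = Nat.card (Fin m × {f : Fin m → ℤ // (∀ i, f i ∈ S) ∧ (∑ i, f i) = -1 ∧
        ∀ j < m, 0 ≤ ∑ i ∈ Finset.univ.filter (fun i : Fin m => i.1 < j), f i}) :=
        (Nat.card_congr (Equiv.ofBijective Φ hbij)).symm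
    _ = m * Nat.card {f : Fin m → ℤ // (∀ i, f i ∈ S) ∧ (∑ i, f i) = -1 ∧
        ∀ j < m, 0 ≤ ∑ i ∈ Finset.univ.filter (fun i : Fin m => i.1 < j), f i} := by
        rw [Nat.card_prod, Nat.card_eq_fintype_card, Fintype.card_fin]
end
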